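/- arXiv:1212.6887 — 5 statements merged into one kernel-verified Lean document; each statement's English description precedes it below -/
import Mathlib

section
/- Let η : ℝ → ℝ be a measurable real-valued function with ∫_ℝ |η(t)|/(1+t²) dt < ∞. If for every z in the upper or lower half-plane ∫_ℝ η(t)/(t−z)² dt = 0, then η is almost everywhere equal to a real constant. -/
open MeasureTheory

open MeasureTheory Real Filter Topology

lemma key_bound {y : ℝ} (hy : y ≠ 0) (R : ℝ) {x t : ℝ} (hx : |x| ≤ R) :
    1 + t ^ 2 ≤ ((1 + 2 * R ^ 2) / y ^ 2 + 2) * ((t - x) ^ 2 + y ^ 2) := by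
  have hy2 : 0 < y ^ 2 := by positivity
  have hxR : x ^ 2 ≤ R ^ 2 := by
    have := abs_nonneg x
    nlinarith [sq_abs x]
  have h2 : ((1 + 2 * R ^ 2) / y ^ 2) * y ^ 2 = 1 + 2 * R ^ 2 :=
    div_mul_cancel₀ _ hy2.ne'
  have hC : (0:ℝ) ≤ (1 + 2 * R ^ 2) / y ^ 2 := by positivity
  nlinarith [mul_nonneg hC (sq_nonneg (t - x)), sq_nonneg (t - x), sq_nonneg (t + x)]

-- Im identity
lemma im_identity (a x y t : ℝ) (hy : y ≠ 0) :
    ((a : ℂ) / (((t : ℂ) - (⟨x, y⟩ : ℂ)) ^ 2)).im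
      = a * (2 * y * (t - x) / (((t - x) ^ 2 + y ^ 2) ^ 2)) := by
  have hden : ((t - x) ^ 2 + y ^ 2) ≠ 0 := by positivity
  simp only [Complex.div_im, Complex.normSq_apply, pow_two, Complex.mul_re, Complex.mul_im,
    Complex.sub_re, Complex.sub_im, Complex.ofReal_re, Complex.ofReal_im]
  have hq : (((t - x) * (t - x) - (0 - y) * (0 - y)) * ((t - x) * (t - x) - (0 - y) * (0 - y)) +
          ((t - x) * (0 - y) + (0 - y) * (t - x)) * ((t - x) * (0 - y) + (0 - y) * (t - x)))
      = ((t - x) * (t - x) + y * y) * ((t - x) * (t - x) + y * y) := by ring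
  rw [hq]
  field_simp
  ring

variable {η : ℝ → ℝ}

lemma integrable_weight (hint : Integrable (fun t : ℝ => |η t| / (1 + t ^ 2))) (C : ℝ) :
    Integrable (fun t : ℝ => C * (|η t| / (1 + t ^ 2))) := hint.const_mul C

lemma kernel_cont (x y : ℝ) (hy : y ≠ 0) :
    Continuous (fun t : ℝ => y / ((t - x) ^ 2 + y ^ 2)) := by
  apply continuous_const.div (by continuity)
  intro t; positivity

lemma integrable_P (hmeas : Measurable η)
    (hint : Integrable (fun t : ℝ => |η t| / (1 + t ^ 2))) {y : ℝ} (hy : y ≠ 0) (x : ℝ) :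
    Integrable (fun t : ℝ => η t * (y / ((t - x) ^ 2 + y ^ 2))) := by
  set C : ℝ := (1 + 2 * |x| ^ 2) / y ^ 2 + 2 with hC
  have hC0 : 0 ≤ C := by positivity
  refine (integrable_weight hint (|y| * C)).mono' ?_ ?_
  · exact (hmeas.mul ((kernel_cont x y hy).measurable)).aestronglyMeasurable
  · filter_upwards with t
    have hkb := key_bound hy |x| (le_refl |x|) (t := t)
    have hden : (0:ℝ) < (t - x) ^ 2 + y ^ 2 := by positivity
    have h1t : (0:ℝ) < 1 + t ^ 2 := by positivity
    rw [Real.norm_eq_abs, abs_mul, abs_div]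
    have : |y| / |(t - x) ^ 2 + y ^ 2| ≤ |y| * C / (1 + t ^ 2) := by
      rw [abs_of_pos hden, div_le_div_iff₀ hden h1t]
      calc |y| * (1 + t ^ 2) ≤ |y| * (C * ((t - x) ^ 2 + y ^ 2)) := by
            exact mul_le_mul_of_nonneg_left hkb (abs_nonneg y)
        _ = |y| * C * ((t - x) ^ 2 + y ^ 2) := by ring
    calc |η t| * (|y| / |(t - x) ^ 2 + y ^ 2|) ≤ |η t| * (|y| * C / (1 + t ^ 2)) :=
          mul_le_mul_of_nonneg_left this (abs_nonneg _)
      _ = |y| * C * (|η t| / (1 + t ^ 2)) := by ring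

lemma integrable_C (hmeas : Measurable η)
    (hint : Integrable (fun t : ℝ => |η t| / (1 + t ^ 2))) {z : ℂ} (hz : z.im ≠ 0) :
    Integrable (fun t : ℝ => (η t : ℂ) / (((t : ℂ) - z) ^ 2)) := by
  set C : ℝ := (1 + 2 * |z.re| ^ 2) / z.im ^ 2 + 2 with hC
  have hC0 : 0 ≤ C := by positivity
  refine (integrable_weight hint C).mono' ?_ ?_
  · apply Measurable.aestronglyMeasurable
    apply Measurable.div
    · exact Complex.measurable_ofReal.comp hmeas
    · fun_prop
  · filter_upwards with t
    have hkb := key_bound hz |z.re| (le_refl |z.re|) (t := t)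
    have hden : (0:ℝ) < (t - z.re) ^ 2 + z.im ^ 2 := by positivity
    have h1t : (0:ℝ) < 1 + t ^ 2 := by positivity
    have habs : ‖(((t : ℂ) - z) ^ 2)‖ = (t - z.re) ^ 2 + z.im ^ 2 := by
      rw [norm_pow, Complex.sq_norm]
      simp [Complex.normSq_apply]; ring
    rw [norm_div, habs, Complex.norm_real, Real.norm_eq_abs]
    rw [div_le_iff₀ hden] at *
    have h := mul_le_mul_of_nonneg_left hkb (div_nonneg (abs_nonneg (η t)) h1t.le)
    calc |η t| = |η t| / (1 + t ^ 2) * (1 + t ^ 2) := by field_simp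
      _ ≤ C * (|η t| / (1 + t ^ 2)) * ((t - z.re) ^ 2 + z.im ^ 2) := by
          rw [hC]; nlinarith [h]

lemma hasDerivAt_P (t y x : ℝ) :
    HasDerivAt (fun x : ℝ => y / ((t - x) ^ 2 + y ^ 2) )
      (2 * y * (t - x) / (((t - x) ^ 2 + y ^ 2) ^ 2)) x := by
  by_cases hy : y = 0
  · simp [hy]
    exact hasDerivAt_const x 0
  have hg : HasDerivAt (fun x : ℝ => (t - x) ^ 2 + y ^ 2) (2 * (t - x) * (-1)) x := by
    have h1 : HasDerivAt (fun x : ℝ => t - x) (-1) x := (hasDerivAt_id x).const_sub t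
    simpa using (h1.pow 2).add_const (y ^ 2)
  have hne : ((t - x) ^ 2 + y ^ 2) ≠ 0 := by positivity
  have := (hg.inv hne).const_mul y
  convert this using 1
  · rfl
  · rfl
  · funext x; simp [div_eq_mul_inv]
  · ring

lemma deriv_zero_aux (hmeas : Measurable η)
    (hint : Integrable (fun t : ℝ => |η t| / (1 + t ^ 2)))
    (hvanish : ∀ z : ℂ, z.im ≠ 0 → (∫ t : ℝ, (η t : ℂ) / (((t : ℂ) - z) ^ 2)) = 0)
    {y : ℝ} (hy : y ≠ 0) (x₀ : ℝ) :
    HasDerivAt (fun x : ℝ => ∫ t : ℝ, η t * (y / ((t - x) ^ 2 + y ^ 2))) 0 x₀ := by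
  set R : ℝ := |x₀| + 1 with hR
  set C : ℝ := (1 + 2 * R ^ 2) / y ^ 2 + 2 with hC
  have hC0 : (0:ℝ) ≤ C := by positivity
  set F' : ℝ → ℝ → ℝ :=
    fun x t => η t * (2 * y * (t - x) / (((t - x) ^ 2 + y ^ 2) ^ 2)) with hF'
  have key : HasDerivAt (fun x : ℝ => ∫ t : ℝ, η t * (y / ((t - x) ^ 2 + y ^ 2)))
      (∫ t : ℝ, F' x₀ t) x₀ := by
    have := hasDerivAt_integral_of_dominated_loc_of_deriv_le (F := fun x t =>
        η t * (y / ((t - x) ^ 2 + y ^ 2))) (F' := F') (x₀ := x₀) (μ := volume)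
        (bound := fun t => C * (|η t| / (1 + t ^ 2))) (s := Metric.ball x₀ 1) (Metric.ball_mem_nhds x₀ one_pos) ?_ ?_ ?_ ?_ ?_ ?_
    · exact this.2
    · filter_upwards with x
      exact (hmeas.mul ((kernel_cont x y hy).measurable)).aestronglyMeasurable
    · exact integrable_P hmeas hint hy x₀
    · apply Measurable.aestronglyMeasurable
      apply hmeas.mul
      apply Measurable.div (by fun_prop)
      fun_prop
    · filter_upwards with t
      intro x hx
      have hxR : |x| ≤ R := by
        rw [Metric.mem_ball, Real.dist_eq] at hx
        have := abs_sub_abs_le_abs_sub x x₀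
        rw [hR]; linarith
      have hkb := key_bound hy R hxR (t := t)
      have hden : (0:ℝ) < (t - x) ^ 2 + y ^ 2 := by positivity
      have h1t : (0:ℝ) < 1 + t ^ 2 := by positivity
      have hAM : |2 * y * (t - x)| ≤ (t - x) ^ 2 + y ^ 2 := by
        rw [abs_mul, abs_mul]
        have h := sq_nonneg (|t - x| - |y|)
        have h2 : |2| * |y| * |t - x| = 2 * |y| * |t - x| := by
          rw [abs_of_nonneg (by norm_num : (0:ℝ) ≤ 2)]
        rw [h2]
        nlinarith [sq_abs (t - x), sq_abs y]
      have hfrac : |2 * y * (t - x) / (((t - x) ^ 2 + y ^ 2) ^ 2)| ≤ C / (1 + t ^ 2) := by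
        rw [abs_div, abs_of_pos (by positivity : (0:ℝ) < ((t - x) ^ 2 + y ^ 2) ^ 2)]
        rw [div_le_div_iff₀ (by positivity) h1t]
        calc |2 * y * (t - x)| * (1 + t ^ 2)
            ≤ ((t - x) ^ 2 + y ^ 2) * (C * ((t - x) ^ 2 + y ^ 2)) := by
              apply mul_le_mul hAM hkb h1t.le hden.le
          _ = C * ((t - x) ^ 2 + y ^ 2) ^ 2 := by ring
      rw [hF']
      simp only [Real.norm_eq_abs, abs_mul]
      calc |η t| * |2 * y * (t - x) / (((t - x) ^ 2 + y ^ 2) ^ 2)|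
          ≤ |η t| * (C / (1 + t ^ 2)) := mul_le_mul_of_nonneg_left hfrac (abs_nonneg _)
        _ = C * (|η t| / (1 + t ^ 2)) := by ring
    · exact integrable_weight hint C
    · filter_upwards with t
      intro x hx
      exact (hasDerivAt_P t y x).const_mul (η t)
  have hzero : (∫ t : ℝ, F' x₀ t) = 0 := by
    set z : ℂ := ⟨x₀, y⟩ with hz
    have hzim : z.im ≠ 0 := hy
    have hident : ∀ t : ℝ, F' x₀ t = ((η t : ℂ) / (((t : ℂ) - z) ^ 2)).im := by
      intro t
      rw [hF', im_identity (η t) x₀ y t hy]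
    rw [funext hident]
    have hInt := integrable_C hmeas hint hzim
    have := integral_im (μ := volume) (f := fun t : ℝ => (η t : ℂ) / (((t : ℂ) - z) ^ 2)) hInt
    rw [hvanish z hzim] at this
    simpa using this
  rwa [hzero] at key

lemma cov (φ : ℝ → ℝ) {y : ℝ} (hy : 0 < y) (t : ℝ) :
    ∫ x : ℝ, φ x * (y / ((t - x) ^ 2 + y ^ 2)) = ∫ σ : ℝ, φ (t - y * σ) * (1 + σ ^ 2)⁻¹ := by
  set g : ℝ → ℝ := fun x => φ x * (y / ((t - x) ^ 2 + y ^ 2)) with hg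
  have h1 : ∫ x : ℝ, g x = ∫ u : ℝ, g (t - u) := (integral_sub_left_eq_self g volume t).symm
  have h2 : ∫ σ : ℝ, g (t - y * σ) = |y⁻¹| • ∫ u : ℝ, g (t - u) :=
    MeasureTheory.Measure.integral_comp_mul_left (fun u => g (t - u)) y
  have h3 : ∀ σ : ℝ, g (t - y * σ) = y⁻¹ * (φ (t - y * σ) * (1 + σ ^ 2)⁻¹) := by
    intro σ
    show φ _ * (y / ((t - (t - y * σ)) ^ 2 + y ^ 2)) = _
    have h1σ : (0:ℝ) < 1 + σ ^ 2 := by positivity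
    have : (t - (t - y * σ)) ^ 2 + y ^ 2 = y ^ 2 * (1 + σ ^ 2) := by ring
    rw [this]
    field_simp
  have h4 : ∫ σ : ℝ, g (t - y * σ) = y⁻¹ * ∫ σ : ℝ, φ (t - y * σ) * (1 + σ ^ 2)⁻¹ := by
    simp_rw [h3]
    exact integral_const_mul y⁻¹ _
  have h5 : ∫ u : ℝ, g (t - u) = y * ∫ σ : ℝ, g (t - y * σ) := by
    rw [h2, abs_of_pos (inv_pos.2 hy), smul_eq_mul, ← mul_assoc, mul_inv_cancel₀ hy.ne', one_mul]
  rw [h1, h5, h4, ← mul_assoc, mul_inv_cancel₀ hy.ne', one_mul]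

lemma inner_limit (φ : ℝ → ℝ) (hφ : Continuous φ) {M : ℝ} (hM : ∀ x, |φ x| ≤ M) (t : ℝ) :
    Tendsto (fun y : ℝ => ∫ σ : ℝ, φ (t - y * σ) * (1 + σ ^ 2)⁻¹) (𝓝[>] (0:ℝ))
      (𝓝 (π * φ t)) := by
  have hπ : π * φ t = ∫ σ : ℝ, φ t * (1 + σ ^ 2)⁻¹ := by
    rw [integral_const_mul, integral_univ_inv_one_add_sq]; ring
  rw [hπ]
  apply tendsto_integral_filter_of_dominated_convergence (bound := fun σ => M * (1 + σ ^ 2)⁻¹)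
  · filter_upwards with y
    apply Continuous.aestronglyMeasurable
    have hc : Continuous fun σ : ℝ => (1 + σ ^ 2)⁻¹ := by
      apply Continuous.inv₀ (by continuity)
      intro σ; positivity
    exact (hφ.comp (by continuity)).mul hc
  · filter_upwards with y
    filter_upwards with σ
    rw [norm_mul, Real.norm_eq_abs, Real.norm_eq_abs]
    have h1σ : (0:ℝ) < 1 + σ ^ 2 := by positivity
    rw [abs_of_pos (inv_pos.2 h1σ)]
    exact mul_le_mul_of_nonneg_right (hM _) (inv_nonneg.2 h1σ.le)
  · exact integrable_inv_one_add_sq.const_mul M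
  · filter_upwards with σ
    have h1 : Tendsto (fun y : ℝ => t - y * σ) (𝓝[>] (0:ℝ)) (𝓝 t) := by
      have : Tendsto (fun y : ℝ => t - y * σ) (𝓝 (0:ℝ)) (𝓝 (t - 0 * σ)) := by
        apply Tendsto.const_sub
        exact (continuous_id.mul continuous_const).tendsto 0
      simpa using this.mono_left nhdsWithin_le_nhds
    exact ((hφ.tendsto t).comp h1).mul_const _

set_option maxHeartbeats 1000000 in
lemma uniform_bound (φ : ℝ → ℝ) (hφ : Continuous φ) (hcs : HasCompactSupport φ) :
    ∃ M : ℝ, 0 ≤ M ∧ ∀ y ∈ Set.Ioc (0:ℝ) 1, ∀ t : ℝ,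
      |∫ σ : ℝ, φ (t - y * σ) * (1 + σ ^ 2)⁻¹| ≤ M / (1 + t ^ 2) := by
  obtain ⟨r, hr⟩ := hcs.isBounded.subset_closedBall 0
  set R : ℝ := max r 1 with hRdef
  have hR1 : (1:ℝ) ≤ R := le_max_right _ _
  have hRsub : tsupport φ ⊆ Metric.closedBall 0 R :=
    hr.trans (Metric.closedBall_subset_closedBall (le_max_left _ _))
  obtain ⟨M₀, hM₀⟩ := hcs.exists_bound_of_continuous hφ
  set Minf : ℝ := max M₀ 0 with hMinf
  have hMb : ∀ x, |φ x| ≤ Minf := fun x => (Real.norm_eq_abs (φ x) ▸ hM₀ x).trans (le_max_left _ _)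
  have hMinf0 : (0:ℝ) ≤ Minf := le_max_right _ _
  have hφint : Integrable φ := hφ.integrable_of_hasCompactSupport hcs
  set M₁ : ℝ := ∫ x : ℝ, |φ x| with hM₁def
  have hM₁0 : 0 ≤ M₁ := integral_nonneg fun x => abs_nonneg _
  refine ⟨π * Minf * (1 + 4 * R ^ 2) + 8 * M₁, by positivity, ?_⟩
  rintro y ⟨hy0, hy1⟩ t
  set M : ℝ := π * Minf * (1 + 4 * R ^ 2) + 8 * M₁ with hMdef
  have h1t : (0:ℝ) < 1 + t ^ 2 := by positivity
  have hcontσ : Continuous fun σ : ℝ => φ (t - y * σ) * (1 + σ ^ 2)⁻¹ := by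
    apply (hφ.comp (by continuity)).mul
    apply Continuous.inv₀ (by continuity)
    intro σ; positivity
  have habsint : Integrable fun σ : ℝ => |φ (t - y * σ)| := by
    have h1 : Integrable fun u : ℝ => |φ (t - u)| :=
      (integrable_comp_sub_left (fun x => |φ x|) t).mpr hφint.abs
    exact h1.comp_mul_left' hy0.ne'
  have habs_val : ∫ σ : ℝ, |φ (t - y * σ)| = y⁻¹ * M₁ := by
    have e1 : ∫ σ : ℝ, |φ (t - y * σ)| = |y⁻¹| • ∫ u : ℝ, |φ (t - u)| :=
      MeasureTheory.Measure.integral_comp_mul_left (fun u => |φ (t - u)|) y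
    have e2 : ∫ u : ℝ, |φ (t - u)| = M₁ := integral_sub_left_eq_self (fun x => |φ x|) volume t
    rw [e1, e2, abs_of_pos (inv_pos.2 hy0), smul_eq_mul]
  by_cases hcase : |t| ≤ 2 * R
  · have hbound : ‖∫ σ : ℝ, φ (t - y * σ) * (1 + σ ^ 2)⁻¹‖ ≤ ∫ σ : ℝ, Minf * (1 + σ ^ 2)⁻¹ := by
      apply norm_integral_le_of_norm_le (integrable_inv_one_add_sq.const_mul Minf)
      filter_upwards with σ
      have h1σ : (0:ℝ) < 1 + σ ^ 2 := by positivity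
      rw [norm_mul, Real.norm_eq_abs, Real.norm_eq_abs, abs_of_pos (inv_pos.2 h1σ)]
      exact mul_le_mul_of_nonneg_right (hMb _) (inv_pos.2 h1σ).le
    rw [Real.norm_eq_abs] at hbound
    have hval : ∫ σ : ℝ, Minf * (1 + σ ^ 2)⁻¹ = Minf * π := by
      rw [integral_const_mul, integral_univ_inv_one_add_sq]
    refine (hbound.trans_eq hval).trans ?_
    rw [le_div_iff₀ h1t]
    have ht2 : t ^ 2 ≤ 4 * R ^ 2 := by nlinarith [sq_abs t, abs_nonneg t]
    rw [hMdef]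
    have step : Minf * π * (1 + t ^ 2) ≤ Minf * π * (1 + 4 * R ^ 2) :=
      mul_le_mul_of_nonneg_left (by linarith) (by positivity)
    have hcomm : Minf * π * (1 + 4 * R ^ 2) = π * Minf * (1 + 4 * R ^ 2) := by ring
    linarith
  · push_neg at hcase
    have ht2R : 2 * R < |t| := hcase
    have ht0 : (0:ℝ) < t ^ 2 := by nlinarith [abs_nonneg t, sq_abs t]
    have hptw : ∀ σ : ℝ, ‖φ (t - y * σ) * (1 + σ ^ 2)⁻¹‖ ≤ 4 * y / t ^ 2 * |φ (t - y * σ)| := by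
      intro σ
      by_cases hz : φ (t - y * σ) = 0
      · rw [hz]; simp
      · have hmem : t - y * σ ∈ tsupport φ := subset_tsupport φ hz
        have hRb : |t - y * σ| ≤ R := by
          have := hRsub hmem
          simpa [Real.dist_eq] using Metric.mem_closedBall.1 this
        have hyσ : |t| - R ≤ |y * σ| := by
          have := abs_sub_abs_le_abs_sub t (t - y * σ)
          simp only [sub_sub_cancel] at this
          linarith
        have hyσ2 : t ^ 2 ≤ 4 * (y * σ) ^ 2 := by
          have h2 : |t| / 2 ≤ |y * σ| := by linarith
          nlinarith [sq_abs t, sq_abs (y * σ), abs_nonneg (y * σ), abs_nonneg t]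
        have h1σ : (0:ℝ) < 1 + σ ^ 2 := by positivity
        have hinv : (1 + σ ^ 2)⁻¹ ≤ 4 * y ^ 2 / t ^ 2 := by
          have hkey : t ^ 2 ≤ 4 * y ^ 2 * (1 + σ ^ 2) := by nlinarith [sq_nonneg y]
          rw [← one_div, div_le_div_iff₀ h1σ ht0]
          nlinarith
        have hynn : y ^ 2 ≤ y := by nlinarith
        rw [norm_mul, Real.norm_eq_abs, Real.norm_eq_abs, abs_of_pos (inv_pos.2 h1σ),
          mul_comm (4 * y / t ^ 2)]
        apply mul_le_mul_of_nonneg_left _ (abs_nonneg _)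
        refine hinv.trans ?_
        rw [div_le_div_iff₀ ht0 ht0]
        nlinarith
    have hb : ‖∫ σ : ℝ, φ (t - y * σ) * (1 + σ ^ 2)⁻¹‖
        ≤ ∫ σ : ℝ, 4 * y / t ^ 2 * |φ (t - y * σ)| := by
      apply norm_integral_le_of_norm_le (habsint.const_mul (4 * y / t ^ 2))
      filter_upwards with σ using hptw σ
    rw [Real.norm_eq_abs] at hb
    have hval : ∫ σ : ℝ, 4 * y / t ^ 2 * |φ (t - y * σ)| = 4 * M₁ / t ^ 2 := by
      rw [integral_const_mul, habs_val]
      field_simp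
    refine (hb.trans_eq hval).trans ?_
    rw [div_le_div_iff₀ ht0 h1t]
    have ht4 : (4:ℝ) ≤ t ^ 2 := by nlinarith [sq_abs t, abs_nonneg t]
    rw [hMdef]
    have hpiterm : (0:ℝ) ≤ π * Minf * (1 + 4 * R ^ 2) * t ^ 2 := by positivity
    nlinarith [mul_nonneg hM₁0 ht0.le]

lemma u_const (hmeas : Measurable η)
    (hint : Integrable (fun t : ℝ => |η t| / (1 + t ^ 2)))
    (hvanish : ∀ z : ℂ, z.im ≠ 0 → (∫ t : ℝ, (η t : ℂ) / (((t : ℂ) - z) ^ 2)) = 0)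
    {y : ℝ} (hy : y ≠ 0) (x : ℝ) :
    ∫ t : ℝ, η t * (y / ((t - x) ^ 2 + y ^ 2))
      = ∫ t : ℝ, η t * (y / ((t - 0) ^ 2 + y ^ 2)) := by
  have hd := deriv_zero_aux hmeas hint hvanish hy
  exact is_const_of_deriv_eq_zero (fun x => (hd x).differentiableAt)
    (fun x => (hd x).deriv) x 0

lemma fubini_step (hmeas : Measurable η)
    (hint : Integrable (fun t : ℝ => |η t| / (1 + t ^ 2)))
    (hvanish : ∀ z : ℂ, z.im ≠ 0 → (∫ t : ℝ, (η t : ℂ) / (((t : ℂ) - z) ^ 2)) = 0)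
    (φ : ℝ → ℝ) (hφ : Continuous φ) (hcs : HasCompactSupport φ)
    {y : ℝ} (hy : 0 < y) :
    ∫ t : ℝ, η t * ∫ x : ℝ, φ x * (y / ((t - x) ^ 2 + y ^ 2))
      = (∫ x : ℝ, φ x) * ∫ t : ℝ, η t * (y / ((t - 0) ^ 2 + y ^ 2)) := by
  obtain ⟨r, hr⟩ := hcs.isBounded.subset_closedBall 0
  set R : ℝ := max r 1 with hRdef
  have hRsub : tsupport φ ⊆ Metric.closedBall 0 R :=
    hr.trans (Metric.closedBall_subset_closedBall (le_max_left _ _))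
  obtain ⟨M₀, hM₀⟩ := hcs.exists_bound_of_continuous hφ
  set Minf : ℝ := max M₀ 0 with hMinf
  have hMb : ∀ x, |φ x| ≤ Minf := fun x => (Real.norm_eq_abs (φ x) ▸ hM₀ x).trans (le_max_left _ _)
  have hMinf0 : (0:ℝ) ≤ Minf := le_max_right _ _
  set C : ℝ := (1 + 2 * R ^ 2) / y ^ 2 + 2 with hC
  have hC0 : (0:ℝ) ≤ C := by positivity
  set f : ℝ → ℝ → ℝ := fun x t => φ x * (η t * (y / ((t - x) ^ 2 + y ^ 2))) with hf
  have hprod : Integrable (Function.uncurry f) (volume.prod volume) := by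
    refine Integrable.mono'
      (g := fun p : ℝ × ℝ => ((Metric.closedBall (0:ℝ) R).indicator (fun _ => Minf) p.1)
        * (y * C * (|η p.2| / (1 + p.2 ^ 2)))) ?_ ?_ ?_
    · exact Integrable.mul_prod
        ((integrable_indicator_iff measurableSet_closedBall).2
          (integrableOn_const measure_closedBall_lt_top.ne))
        (integrable_weight hint (y * C))
    · apply Measurable.aestronglyMeasurable
      apply Measurable.mul (hφ.measurable.comp measurable_fst)
      apply Measurable.mul (hmeas.comp measurable_snd)
      apply Measurable.div measurable_const
      fun_prop
    · filter_upwards with p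
      rcases p with ⟨x, t⟩
      by_cases hx : x ∈ Metric.closedBall (0:ℝ) R
      · have hxR : |x| ≤ R := by simpa [Real.dist_eq] using Metric.mem_closedBall.1 hx
        have hkb := key_bound (ne_of_gt hy) R hxR (t := t)
        have hden : (0:ℝ) < (t - x) ^ 2 + y ^ 2 := by positivity
        have h1t : (0:ℝ) < 1 + t ^ 2 := by positivity
        have hP : y / ((t - x) ^ 2 + y ^ 2) ≤ y * C / (1 + t ^ 2) := by
          rw [div_le_div_iff₀ hden h1t]
          calc y * (1 + t ^ 2) ≤ y * (C * ((t - x) ^ 2 + y ^ 2)) :=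
                mul_le_mul_of_nonneg_left hkb hy.le
            _ = y * C * ((t - x) ^ 2 + y ^ 2) := by ring
        rw [Set.indicator_of_mem hx]
        show ‖φ x * (η t * (y / ((t - x) ^ 2 + y ^ 2)))‖ ≤ _
        rw [Real.norm_eq_abs, abs_mul, abs_mul]
        have hPpos : (0:ℝ) ≤ y / ((t - x) ^ 2 + y ^ 2) := by positivity
        rw [abs_of_nonneg hPpos]
        calc |φ x| * (|η t| * (y / ((t - x) ^ 2 + y ^ 2)))
            ≤ Minf * (|η t| * (y * C / (1 + t ^ 2))) := by
              apply mul_le_mul (hMb x) _ (by positivity) hMinf0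
              exact mul_le_mul_of_nonneg_left hP (abs_nonneg _)
          _ = Minf * (y * C * (|η t| / (1 + t ^ 2))) := by ring
      · have hφx : φ x = 0 := by
          by_contra h
          exact hx (hRsub (subset_tsupport φ h))
        rw [Set.indicator_of_notMem hx]
        show ‖φ x * (η t * (y / ((t - x) ^ 2 + y ^ 2)))‖ ≤ _
        rw [hφx]
        simp only [zero_mul, norm_zero]
        positivity
  have hswap := integral_integral_swap hprod
  -- hswap : ∫ x, ∫ t, f x t = ∫ t, ∫ x, f x t
  have hleft : ∀ x : ℝ, (∫ t : ℝ, f x t) = φ x * ∫ t : ℝ, η t * (y / ((t - 0) ^ 2 + y ^ 2)) := by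
    intro x
    rw [hf]
    simp only []
    rw [integral_const_mul]
    rw [u_const hmeas hint hvanish (ne_of_gt hy) x]
  have hright : ∀ t : ℝ, (∫ x : ℝ, f x t) = η t * ∫ x : ℝ, φ x * (y / ((t - x) ^ 2 + y ^ 2)) := by
    intro t
    rw [hf]
    simp only []
    rw [← integral_const_mul]
    congr 1
    funext x
    ring
  calc ∫ t : ℝ, η t * ∫ x : ℝ, φ x * (y / ((t - x) ^ 2 + y ^ 2))
      = ∫ t : ℝ, ∫ x : ℝ, f x t := by
        congr 1; funext t; rw [hright t]
    _ = ∫ x : ℝ, ∫ t : ℝ, f x t := hswap.symm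
    _ = ∫ x : ℝ, φ x * ∫ t : ℝ, η t * (y / ((t - 0) ^ 2 + y ^ 2)) := by
        congr 1; funext x; rw [hleft x]
    _ = (∫ x : ℝ, φ x) * ∫ t : ℝ, η t * (y / ((t - 0) ^ 2 + y ^ 2)) := by
        rw [integral_mul_const]

/-- If `η : ℝ → ℝ` is measurable with `∫ |η(t)|/(1+t²) dt < ∞` and
`∫ η(t)/(t-z)² dt = 0` for every non-real `z`, then `η` is a.e. equal to a constant. -/
theorem statement_0 (η : ℝ → ℝ) (hmeas : Measurable η)
    (hint : Integrable (fun t : ℝ => |η t| / (1 + t ^ 2)))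
    (hvanish : ∀ z : ℂ, z.im ≠ 0 → (∫ t : ℝ, (η t : ℂ) / (((t : ℂ) - z) ^ 2)) = 0) :
    ∃ c : ℝ, ∀ᵐ t : ℝ ∂volume, η t = c := by
  have hloc : LocallyIntegrable η := by
    rw [MeasureTheory.locallyIntegrable_iff]
    intro k hk
    obtain ⟨R, hRk⟩ := hk.isBounded.subset_closedBall 0
    refine Integrable.mono' (g := fun t => (1 + R ^ 2) * (|η t| / (1 + t ^ 2)))
      ((integrable_weight hint (1 + R ^ 2)).integrableOn)
      hmeas.aestronglyMeasurable.restrict ?_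
    rw [ae_restrict_iff' hk.measurableSet]
    filter_upwards with t ht
    have htR : |t| ≤ R := by simpa [Real.dist_eq] using Metric.mem_closedBall.1 (hRk ht)
    have h1t : (0:ℝ) < 1 + t ^ 2 := by positivity
    rw [Real.norm_eq_abs]
    calc |η t| = (|η t| / (1 + t ^ 2)) * (1 + t ^ 2) := by field_simp
      _ ≤ (|η t| / (1 + t ^ 2)) * (1 + R ^ 2) := by
          apply mul_le_mul_of_nonneg_left _ (by positivity)
          nlinarith [sq_abs t, abs_nonneg t]
      _ = (1 + R ^ 2) * (|η t| / (1 + t ^ 2)) := by ring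
  set c : ℝ → ℝ := fun y => ∫ t : ℝ, η t * (y / ((t - 0) ^ 2 + y ^ 2)) with hcdef
  have limitG : ∀ φ : ℝ → ℝ, Continuous φ → HasCompactSupport φ →
      Tendsto (fun y : ℝ => (∫ x : ℝ, φ x) * c y) (𝓝[>] (0:ℝ))
        (𝓝 (π * ∫ t : ℝ, η t * φ t)) := by
    intro φ hφ hcsφ
    obtain ⟨M, hM0, hM⟩ := uniform_bound φ hφ hcsφ
    obtain ⟨Mb, hMbd⟩ := hcsφ.exists_bound_of_continuous hφ
    have hMb : ∀ x, |φ x| ≤ max Mb 0 :=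
      fun x => (Real.norm_eq_abs (φ x) ▸ hMbd x).trans (le_max_left _ _)
    have key : Tendsto (fun y : ℝ => ∫ t : ℝ, η t * ∫ σ : ℝ, φ (t - y * σ) * (1 + σ ^ 2)⁻¹)
        (𝓝[>] (0:ℝ)) (𝓝 (∫ t : ℝ, η t * (π * φ t))) := by
      apply tendsto_integral_filter_of_dominated_convergence
        (bound := fun t => M * (|η t| / (1 + t ^ 2)))
      · filter_upwards with y
        have hSM : StronglyMeasurable (fun q : ℝ × ℝ => φ (q.1 - y * q.2) * (1 + q.2 ^ 2)⁻¹) := by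
          apply Continuous.stronglyMeasurable
          apply (hφ.comp (by continuity)).mul
          apply Continuous.inv₀ (by continuity)
          intro q; positivity
        exact hmeas.aestronglyMeasurable.mul
          hSM.integral_prod_right'.aestronglyMeasurable
      · filter_upwards [Ioc_mem_nhdsGT_of_mem
          (Set.mem_Ico.2 ⟨le_refl (0:ℝ), zero_lt_one⟩)] with y hy
        filter_upwards with t
        rw [Real.norm_eq_abs, abs_mul]
        calc |η t| * |∫ σ : ℝ, φ (t - y * σ) * (1 + σ ^ 2)⁻¹|
            ≤ |η t| * (M / (1 + t ^ 2)) :=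
              mul_le_mul_of_nonneg_left (hM y hy t) (abs_nonneg _)
          _ = M * (|η t| / (1 + t ^ 2)) := by ring
      · exact integrable_weight hint M
      · filter_upwards with t
        exact (inner_limit φ hφ hMb t).const_mul (η t)
    have heq : ∀ᶠ y in 𝓝[>] (0:ℝ),
        (∫ t : ℝ, η t * ∫ σ : ℝ, φ (t - y * σ) * (1 + σ ^ 2)⁻¹) = (∫ x : ℝ, φ x) * c y := by
      filter_upwards [self_mem_nhdsWithin] with y hy
      have hy0 : (0:ℝ) < y := Set.mem_Ioi.mp hy
      have hcov : ∀ t : ℝ, (∫ σ : ℝ, φ (t - y * σ) * (1 + σ ^ 2)⁻¹)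
          = ∫ x : ℝ, φ x * (y / ((t - x) ^ 2 + y ^ 2)) := fun t => (cov φ hy0 t).symm
      simp_rw [hcov]
      exact fubini_step hmeas hint hvanish φ hφ hcsφ hy0
    have target_eq : ∫ t : ℝ, η t * (π * φ t) = π * ∫ t : ℝ, η t * φ t := by
      rw [← integral_const_mul]
      congr 1; funext t; ring
    rw [target_eq] at key
    exact Tendsto.congr' heq key
  set φ₀bump : ContDiffBump (0:ℝ) := ⟨1, 2, one_pos, one_lt_two⟩ with hφ₀bump
  set φ₀ : ℝ → ℝ := φ₀bump.normed volume with hφ₀def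
  have hφ₀c : Continuous φ₀ := φ₀bump.continuous_normed
  have hφ₀s : HasCompactSupport φ₀ := φ₀bump.hasCompactSupport_normed
  have hφ₀1 : ∫ x : ℝ, φ₀ x = 1 := φ₀bump.integral_normed
  set L : ℝ := ∫ t : ℝ, η t * φ₀ t with hLdef
  have hcL : Tendsto c (𝓝[>] (0:ℝ)) (𝓝 (π * L)) := by
    have := limitG φ₀ hφ₀c hφ₀s
    rw [hφ₀1] at this
    simpa using this
  refine ⟨L, ?_⟩
  have := ae_eq_of_integral_contDiff_smul_eq hloc (locallyIntegrable_const L) ?_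
  · exact this
  intro g hg hgs
  have h1 := limitG g hg.continuous hgs
  have h2 : Tendsto (fun y : ℝ => (∫ x : ℝ, g x) * c y) (𝓝[>] (0:ℝ))
      (𝓝 ((∫ x : ℝ, g x) * (π * L))) := hcL.const_mul _
  have h3 : π * ∫ t : ℝ, η t * g t = (∫ x : ℝ, g x) * (π * L) := tendsto_nhds_unique h1 h2
  have h3' : π * (∫ t : ℝ, η t * g t) = π * ((∫ x : ℝ, g x) * L) := by rw [h3]; ring
  have h4 : ∫ t : ℝ, η t * g t = (∫ x : ℝ, g x) * L := mul_left_cancel₀ Real.pi_ne_zero h3'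
  have hLHS : ∫ x : ℝ, g x • η x = ∫ t : ℝ, η t * g t := by
    congr 1; funext x; simp [smul_eq_mul]; ring
  have hRHS : ∫ x : ℝ, g x • L = (∫ x : ℝ, g x) * L := by
    simp only [smul_eq_mul]
    exact integral_mul_const _ _
  rw [hLHS, hRHS, h4]
end

section
/- Let H and H' be densely defined closed operators on a Hilbert space with a common point ζ in their resolvent sets such that (H'−ζ)⁻¹ − (H−ζ)⁻¹ is trace class. Suppose ξ and ξ' are real-valued functions in L¹(ℝ, dt/(1+t²)) such that for all non-real z, tr((H'−z)⁻¹ − (H−z)⁻¹) = −(1/π)∫_ℝ ξ(t)/(t−z)² dt and the same identity holds with ξ' in place of ξ. Then ξ − ξ' is a.e. equal to a real constant. -/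
noncomputable section
open scoped InnerProductSpace ComplexConjugate
open MeasureTheory Filter

namespace PD

variable (H : Type*) [NormedAddCommGroup H] [InnerProductSpace ℂ H] [CompleteSpace H]

/-- The index set of a fixed Hilbert basis of `H`. -/
def hbIdx : Set H := (exists_hilbertBasis ℂ H).choose

/-- A fixed Hilbert basis of `H`. -/
def hb : HilbertBasis (hbIdx H) ℂ H := (exists_hilbertBasis ℂ H).choose_spec.choose

variable {H}

/-- Hilbert--Schmidt operator. -/
def IsHS (T : H →L[ℂ] H) : Prop := Summable fun i : hbIdx H => ‖T (hb H i)‖ ^ 2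

/-- Trace class operator: a product of two Hilbert--Schmidt operators. -/
def IsTraceClass (T : H →L[ℂ] H) : Prop :=
  ∃ A B : H →L[ℂ] H, IsHS A ∧ IsHS B ∧ T = A.comp B

/-- The trace, computed in the fixed Hilbert basis. -/
def trace (T : H →L[ℂ] H) : ℂ := ∑' i : hbIdx H, ⟪(hb H i : H), T (hb H i)⟫_ℂ

/-- The Fredholm determinant `det(I + T)` as the limit of finite-section determinants. -/
def fredholmDet (T : H →L[ℂ] H) : ℂ := by
  classical
  exact limUnder Filter.atTop fun s : Finset (hbIdx H) =>
    Matrix.det (Matrix.of fun i j : s =>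
      (if i = j then (1 : ℂ) else 0) + ⟪(hb H (i : hbIdx H) : H), T (hb H (j : hbIdx H))⟫_ℂ)

/-- The trace norm, as the supremum over finite orthonormal systems. -/
def traceNorm (T : H →L[ℂ] H) : ℝ :=
  ⨆ q : Σ n : ℕ, {p : (Fin n → H) × (Fin n → H) // Orthonormal ℂ p.1 ∧ Orthonormal ℂ p.2},
    ∑ k, ‖⟪q.2.1.1 k, T (q.2.1.2 k)⟫_ℂ‖

/-- `R` is the resolvent of the (possibly unbounded) operator `T` at `z`,
i.e. `R = (T - z)⁻¹` as a bounded everywhere-defined operator. -/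
structure IsResolventAt (T : H →ₗ.[ℂ] H) (z : ℂ) (R : H →L[ℂ] H) : Prop where
  mem : ∀ x, R x ∈ T.domain
  right : ∀ x, T ⟨R x, mem x⟩ - z • R x = x
  left : ∀ x : T.domain, R (T x - z • (x : H)) = (x : H)

/-- Accumulative operator: `Im (T f, f) ≤ 0` on the domain. -/
def IsAccumulative (T : H →ₗ.[ℂ] H) : Prop :=
  ∀ f : T.domain, (⟪(f : H), T f⟫_ℂ).im ≤ 0

/-- Maximal accumulative operator: accumulative and every point of the open upper
half-plane belongs to the resolvent set. -/
def IsMaxAccumulative (T : H →ₗ.[ℂ] H) : Prop :=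
  IsAccumulative T ∧ ∀ z : ℂ, 0 < z.im → ∃ R : H →L[ℂ] H, IsResolventAt T z R

/-- Densely defined operator. -/
def IsDenselyDefined (T : H →ₗ.[ℂ] H) : Prop := Dense (T.domain : Set H)

/-- Symmetric operator. -/
def IsSymmetricP (T : H →ₗ.[ℂ] H) : Prop :=
  ∀ x y : T.domain, ⟪(x : H), T y⟫_ℂ = ⟪T x, (y : H)⟫_ℂ

/-- The imaginary part `(T - T*)/(2i)` of a bounded operator. -/
def imP {𝓗 : Type*} [NormedAddCommGroup 𝓗] [InnerProductSpace ℂ 𝓗] [CompleteSpace 𝓗]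
    (T : 𝓗 →L[ℂ] 𝓗) : 𝓗 →L[ℂ] 𝓗 :=
  ((2 * Complex.I)⁻¹ : ℂ) • (T - ContinuousLinearMap.adjoint T)


end PD

namespace PDAux
open Complex


lemma sub_ne {z : ℂ} (hz : z.im ≠ 0) (t : ℝ) : (t : ℂ) - z ≠ 0 := by
  intro h
  have : ((t : ℂ) - z).im = 0 := by rw [h]; simp
  simp only [Complex.sub_im, Complex.ofReal_im, zero_sub, neg_eq_zero] at this
  exact hz this

lemma normSq_sub (z : ℂ) (t : ℝ) :
    Complex.normSq ((t : ℂ) - z) = (t - z.re) ^ 2 + z.im ^ 2 := by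
  rw [Complex.normSq_apply]
  simp [Complex.sub_re, Complex.sub_im]
  ring

/-- main kernel bound -/
lemma kbound {z : ℂ} (hz : z.im ≠ 0) (t : ℝ) :
    (1 + t ^ 2) * ‖((t : ℂ) - z)⁻¹‖ ^ 2 ≤ max 2 ((1 + 2 * z.re ^ 2) / z.im ^ 2) := by
  have hne : (t : ℂ) - z ≠ 0 := sub_ne hz t
  have hpos : 0 < (t - z.re) ^ 2 + z.im ^ 2 := by positivity
  have hnorm : ‖((t : ℂ) - z)⁻¹‖ ^ 2 = ((t - z.re) ^ 2 + z.im ^ 2)⁻¹ := by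
    rw [norm_inv, inv_pow, Complex.sq_norm, normSq_sub]
  rw [hnorm, mul_inv_le_iff₀ hpos]
  set M := max 2 ((1 + 2 * z.re ^ 2) / z.im ^ 2) with hM
  have h1 : 2 ≤ M := le_max_left _ _
  have h2 : (1 + 2 * z.re ^ 2) / z.im ^ 2 ≤ M := le_max_right _ _
  have hy : 0 < z.im ^ 2 := by positivity
  rw [div_le_iff₀ hy] at h2
  nlinarith [sq_nonneg (t - 2 * z.re), sq_nonneg (t - z.re)]


abbrev M (z : ℂ) : ℝ := max 2 ((1 + 2 * z.re ^ 2) / z.im ^ 2)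

lemma M_nonneg (z : ℂ) : 0 ≤ M z := le_trans (by norm_num) (le_max_left _ _)

/-- product of two first-power kernels bound -/
lemma kbound2 {z w : ℂ} (hz : z.im ≠ 0) (hw : w.im ≠ 0) (t : ℝ) :
    (1 + t ^ 2) * (‖((t : ℂ) - z)⁻¹‖ * ‖((t : ℂ) - w)⁻¹‖) ≤ (M z + M w) / 2 := by
  have h1 := kbound hz t
  have h2 := kbound hw t
  have ht : (1 : ℝ) ≤ 1 + t ^ 2 := by nlinarith [sq_nonneg t]
  nlinarith [norm_nonneg (((t : ℂ) - z)⁻¹), norm_nonneg (((t : ℂ) - w)⁻¹),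
    mul_nonneg (mul_nonneg (by nlinarith [sq_nonneg t] : (0:ℝ) ≤ 1 + t ^ 2) (norm_nonneg (((t : ℂ) - z)⁻¹)))
      (norm_nonneg (((t : ℂ) - w)⁻¹)),
    sq_nonneg (‖((t : ℂ) - z)⁻¹‖ - ‖((t : ℂ) - w)⁻¹‖)]

/-- integrable times bounded a.e.-strongly-measurable kernel -/
lemma int_mul_bdd {f : ℝ → ℂ} (hf : Integrable f) {K : ℝ → ℂ}
    (hK : AEStronglyMeasurable K volume) {C : ℝ} (hC : ∀ t, ‖K t‖ ≤ C) :
    Integrable (fun t => f t * K t) := by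
  refine (hf.norm.const_mul C).mono' (hf.aestronglyMeasurable.mul hK) ?_
  filter_upwards with t
  rw [norm_mul]
  exact (mul_le_mul_of_nonneg_left (hC t) (norm_nonneg (f t))).trans_eq (mul_comm _ _)

/-- kernel difference identity -/
lemma kdiff {z w : ℂ} (hz : z.im ≠ 0) (hw : w.im ≠ 0) (t : ℝ) :
    ((t : ℂ) - z)⁻¹ - ((t : ℂ) - w)⁻¹ = (z - w) * (((t : ℂ) - z)⁻¹ * ((t : ℂ) - w)⁻¹) := by
  have h1 := sub_ne hz t
  have h2 := sub_ne hw t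
  field_simp
  ring

lemma W_norm (t : ℝ) : ‖(1 + (t : ℂ) ^ 2)‖ = 1 + t ^ 2 := by
  have : (1 + (t : ℂ) ^ 2) = ((1 + t ^ 2 : ℝ) : ℂ) := by push_cast; ring
  rw [this, Complex.norm_real]
  exact Real.norm_of_nonneg (by positivity)

lemma measurable_k (z : ℂ) : AEStronglyMeasurable (fun t : ℝ => ((t : ℂ) - z)⁻¹) volume := by
  exact ((Complex.measurable_ofReal.sub measurable_const).inv).aestronglyMeasurable

/-- Integrability of f · W · (k z − k w) -/
lemma int_diff {f : ℝ → ℂ} (hf : Integrable f) {z w : ℂ} (hz : z.im ≠ 0) (hw : w.im ≠ 0) :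
    Integrable (fun t : ℝ =>
      f t * ((1 + (t : ℂ) ^ 2) * (((t : ℂ) - z)⁻¹ - ((t : ℂ) - w)⁻¹))) := by
  apply int_mul_bdd hf
  · exact ((Complex.measurable_ofReal.pow_const 2).const_add 1).aestronglyMeasurable.mul
      (((measurable_k z).sub (measurable_k w)))
  · intro t
    rw [kdiff hz hw t]
    calc ‖(1 + (t : ℂ) ^ 2) * ((z - w) * (((t : ℂ) - z)⁻¹ * ((t : ℂ) - w)⁻¹))‖
        = ‖z - w‖ * ((1 + t ^ 2) * (‖((t : ℂ) - z)⁻¹‖ * ‖((t : ℂ) - w)⁻¹‖)) := by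
          rw [norm_mul, norm_mul, norm_mul, W_norm]; ring
      _ ≤ ‖z - w‖ * ((M z + M w) / 2) :=
          mul_le_mul_of_nonneg_left (kbound2 hz hw t) (norm_nonneg _)

/-- Integrability of f · W · k z ^ (-2) -/
lemma int_sq {f : ℝ → ℂ} (hf : Integrable f) {z : ℂ} (hz : z.im ≠ 0) :
    Integrable (fun t : ℝ => f t * ((1 + (t : ℂ) ^ 2) * (((t : ℂ) - z) ^ 2)⁻¹)) := by
  apply int_mul_bdd hf
  · exact ((Complex.measurable_ofReal.pow_const 2).const_add 1).aestronglyMeasurable.mul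
      (((Complex.measurable_ofReal.sub measurable_const).pow_const 2).inv.aestronglyMeasurable)
  · intro t
    have : ‖(1 + (t : ℂ) ^ 2) * (((t : ℂ) - z) ^ 2)⁻¹‖
        = (1 + t ^ 2) * ‖((t : ℂ) - z)⁻¹‖ ^ 2 := by
      rw [norm_mul, W_norm, ← inv_pow, norm_pow]
    rw [this]
    exact kbound hz t


lemma hasDeriv_ker (t : ℝ) {w : ℂ} (hw : w.im ≠ 0) :
    HasDerivAt (fun z : ℂ => ((t : ℂ) - z)⁻¹) ((((t : ℂ) - w) ^ 2)⁻¹) w := by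
  have h1 : HasDerivAt (fun z : ℂ => (t : ℂ) - z) (-1) w := by
    simpa using (hasDerivAt_id w).const_sub ((t : ℂ))
  have h2 := h1.inv (sub_ne hw t)
  simpa [neg_div, one_div, Pi.inv_def] using h2

/-- Step A: the integral against the difference kernel vanishes on the upper half plane. -/
lemma stepA {f : ℝ → ℂ} (hf : Integrable f)
    (h : ∀ z : ℂ, z.im ≠ 0 →
      ∫ t : ℝ, f t * ((1 + (t : ℂ) ^ 2) * (((t : ℂ) - z) ^ 2)⁻¹) = 0)
    {z : ℂ} (hz : 0 < z.im) :
    ∫ t : ℝ, f t * ((1 + (t : ℂ) ^ 2) * (((t : ℂ) - z)⁻¹ - ((t : ℂ) - Complex.I)⁻¹)) = 0 := by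
  set U : ℂ → ℂ := fun w =>
    ∫ t : ℝ, f t * ((1 + (t : ℂ) ^ 2) * (((t : ℂ) - w)⁻¹ - ((t : ℂ) - Complex.I)⁻¹)) with hUdef
  have hU : ∀ w : ℂ, 0 < w.im → HasDerivAt U 0 w := by
    intro w hw
    set ε : ℝ := w.im / 2 with hε
    have hεpos : 0 < ε := by positivity
    set Cb : ℝ := max 2 ((1 + 2 * (|w.re| + ε) ^ 2) / ε ^ 2) with hCb
    have key := hasDerivAt_integral_of_dominated_loc_of_deriv_le (μ := volume)
      (F := fun (x : ℂ) (t : ℝ) =>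
        f t * ((1 + (t : ℂ) ^ 2) * (((t : ℂ) - x)⁻¹ - ((t : ℂ) - Complex.I)⁻¹)))
      (F' := fun (x : ℂ) (t : ℝ) => f t * ((1 + (t : ℂ) ^ 2) * (((t : ℂ) - x) ^ 2)⁻¹))
      (x₀ := w) (bound := fun t => Cb * ‖f t‖) (s := Metric.ball w ε) (Metric.ball_mem_nhds w hεpos)
      (by
        filter_upwards with x
        exact hf.aestronglyMeasurable.mul
          ((((Complex.measurable_ofReal.pow_const 2).const_add 1).aestronglyMeasurable).mul
            (((measurable_k x).sub (measurable_k Complex.I)))))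
      (int_diff hf (ne_of_gt hw) (by simp : (Complex.I).im ≠ 0))
      (hf.aestronglyMeasurable.mul
        ((((Complex.measurable_ofReal.pow_const 2).const_add 1).aestronglyMeasurable).mul
          (((Complex.measurable_ofReal.sub measurable_const).pow_const 2).inv.aestronglyMeasurable)))
      (by
        filter_upwards with t
        intro x hx
        have hd : ‖x - w‖ < ε := by simpa [Metric.mem_ball, dist_eq_norm] using hx
        have him : |x.im - w.im| < ε :=
          lt_of_le_of_lt (by simpa using Complex.abs_im_le_norm (x - w)) hd
        have hre : |x.re - w.re| < ε :=
          lt_of_le_of_lt (by simpa using Complex.abs_re_le_norm (x - w)) hd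
        have hxim : ε < x.im := by
          have h2 := abs_lt.mp him
          simp only [hε] at h2 ⊢
          linarith [h2.1]
        have hxim0 : (0:ℝ) < x.im := lt_trans hεpos hxim
        have hxre : |x.re| ≤ |w.re| + ε := by
          have h1 := abs_sub_abs_le_abs_sub x.re w.re
          linarith [le_of_lt hre]
        have hMx : M x ≤ Cb := by
          refine max_le_max le_rfl ?_
          refine div_le_div₀ (by positivity) ?_ (by positivity) ?_
          · nlinarith [pow_le_pow_left₀ (abs_nonneg x.re) hxre 2, _root_.sq_abs x.re]
          · nlinarith [hxim, hεpos]
        have hnorm : ‖f t * ((1 + (t : ℂ) ^ 2) * (((t : ℂ) - x) ^ 2)⁻¹)‖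
            = ‖f t‖ * ((1 + t ^ 2) * ‖((t : ℂ) - x)⁻¹‖ ^ 2) := by
          rw [norm_mul, norm_mul, W_norm, ← inv_pow, norm_pow]
        rw [hnorm, mul_comm Cb]
        exact mul_le_mul_of_nonneg_left
          ((kbound (ne_of_gt hxim0) t).trans hMx) (norm_nonneg _))
      (hf.norm.const_mul Cb)
      (by
        filter_upwards with t
        intro x hx
        have hd : ‖x - w‖ < ε := by simpa [Metric.mem_ball, dist_eq_norm] using hx
        have him : |x.im - w.im| < ε :=
          lt_of_le_of_lt (by simpa using Complex.abs_im_le_norm (x - w)) hd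
        have hxim : 0 < x.im := by
          have h2 := abs_lt.mp him
          simp only [hε] at h2
          linarith [h2.1]
        have hder := HasDerivAt.const_mul (f t * (1 + (t : ℂ) ^ 2))
          ((hasDeriv_ker t (ne_of_gt hxim)).sub_const (((t : ℂ) - Complex.I)⁻¹))
        simpa [mul_assoc] using hder)
    have h2 := key.2
    rw [h w (ne_of_gt hw)] at h2
    exact h2
  have hFconst : ∀ x ∈ {c : ℂ | (0:ℝ) < c.im}, ∀ y ∈ {c : ℂ | (0:ℝ) < c.im}, U x = U y := by
    intro x hx y hy
    have hzero : ContinuousLinearMap.toSpanSingleton ℂ (0 : ℂ) = 0 := by ext v; simp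
    have hmv := Convex.norm_image_sub_le_of_norm_hasFDerivWithin_le
      (f := U) (f' := fun _ => (0 : ℂ →L[ℂ] ℂ)) (s := {c : ℂ | (0:ℝ) < c.im}) (C := 0)
      (fun v hv => by
        have h3 := (hU v hv).hasFDerivAt
        rw [hzero] at h3
        exact h3.hasFDerivWithinAt)
      (fun v _ => by simp) (convex_halfSpace_im_gt 0) hy hx
    have : ‖U x - U y‖ ≤ 0 := by simpa using hmv
    have := le_antisymm this (norm_nonneg _)
    rwa [norm_eq_zero, sub_eq_zero] at this
  have hUI : U Complex.I = 0 := by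
    simp [hUdef]
  have hfin := hFconst z hz Complex.I (by simp)
  rw [hUI] at hfin
  exact hfin


lemma integral_ofReal' {f : ℝ → ℝ} : ∫ t : ℝ, ((f t : ℝ) : ℂ) = ((∫ t : ℝ, f t : ℝ) : ℂ) :=
  integral_ofReal

lemma stepD {f : ℝ → ℂ} (hf : Integrable f)
    (h : ∀ z : ℂ, z.im ≠ 0 →
      ∫ t : ℝ, f t * ((1 + (t : ℂ) ^ 2) * (((t : ℂ) - z) ^ 2)⁻¹) = 0)
    {z w : ℂ} (hz : 0 < z.im) (hw : 0 < w.im) :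
    ∫ t : ℝ, f t * ((1 + (t : ℂ) ^ 2) * (((t : ℂ) - z)⁻¹ - ((t : ℂ) - w)⁻¹)) = 0 := by
  have hI : (Complex.I).im ≠ 0 := by simp
  have hid : (fun t : ℝ => f t * ((1 + (t : ℂ) ^ 2) * (((t : ℂ) - z)⁻¹ - ((t : ℂ) - w)⁻¹)))
      = fun t : ℝ => f t * ((1 + (t : ℂ) ^ 2) * (((t : ℂ) - z)⁻¹ - ((t : ℂ) - Complex.I)⁻¹))
        - f t * ((1 + (t : ℂ) ^ 2) * (((t : ℂ) - w)⁻¹ - ((t : ℂ) - Complex.I)⁻¹)) := by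
    funext t; ring
  rw [hid, integral_sub (int_diff hf (ne_of_gt hz) hI) (int_diff hf (ne_of_gt hw) hI),
    stepA hf h hz, stepA hf h hw, sub_zero]

lemma stepDlow {f : ℝ → ℝ} (hf : Integrable f)
    (h : ∀ z : ℂ, z.im ≠ 0 →
      ∫ t : ℝ, (f t : ℂ) * ((1 + (t : ℂ) ^ 2) * (((t : ℂ) - z) ^ 2)⁻¹) = 0)
    {z w : ℂ} (hz : z.im < 0) (hw : w.im < 0) :
    ∫ t : ℝ, (f t : ℂ) * ((1 + (t : ℂ) ^ 2) * (((t : ℂ) - z)⁻¹ - ((t : ℂ) - w)⁻¹)) = 0 := by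
  have hD := stepD hf.ofReal h (z := (starRingEnd ℂ) z) (w := (starRingEnd ℂ) w)
    (by simpa using neg_pos.mpr hz) (by simpa using neg_pos.mpr hw)
  have hc : ∫ t : ℝ, (f t : ℂ) * ((1 + (t : ℂ) ^ 2) * (((t : ℂ) - z)⁻¹ - ((t : ℂ) - w)⁻¹))
      = (starRingEnd ℂ) (∫ t : ℝ, (f t : ℂ) *
          ((1 + (t : ℂ) ^ 2) * (((t : ℂ) - (starRingEnd ℂ) z)⁻¹
            - ((t : ℂ) - (starRingEnd ℂ) w)⁻¹))) := by
    rw [← integral_conj]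
    congr 1
    funext t
    simp [map_mul, map_sub, map_add, map_inv₀, map_pow, Complex.conj_ofReal]
  have hD' : ∫ t : ℝ, ((f t : ℝ) : ℂ) * ((1 + (t : ℂ) ^ 2) *
      (((t : ℂ) - (starRingEnd ℂ) z)⁻¹ - ((t : ℂ) - (starRingEnd ℂ) w)⁻¹)) = 0 := hD
  rw [hc, hD', map_zero]

lemma midker (t : ℝ) :
    (1 + (t : ℂ) ^ 2) * (((t : ℂ) - Complex.I)⁻¹ - ((t : ℂ) - -Complex.I)⁻¹)
      = 2 * Complex.I := by
  have hW : (1 : ℂ) + (t : ℂ) ^ 2 ≠ 0 := by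
    have h0 : ((1 + t ^ 2 : ℝ) : ℂ) ≠ 0 := by
      exact_mod_cast (by positivity : (1 + t ^ 2 : ℝ) ≠ 0)
    have : (1 : ℂ) + (t : ℂ) ^ 2 = ((1 + t ^ 2 : ℝ) : ℂ) := by push_cast; ring
    rw [this]; exact h0
  rw [kdiff (by simp : (Complex.I).im ≠ 0) (by simp : (-Complex.I).im ≠ 0) t,
    show Complex.I - -Complex.I = 2 * Complex.I by ring,
    show ((t : ℂ) - Complex.I)⁻¹ * ((t : ℂ) - -Complex.I)⁻¹ = ((1 : ℂ) + (t : ℂ) ^ 2)⁻¹ by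
      rw [← mul_inv]; congr 1; linear_combination (-1 : ℂ) * Complex.I_sq]
  field_simp

/-- Step B: the Poisson integral identity. -/
lemma poisson {f : ℝ → ℝ} (hf : Integrable f)
    (h : ∀ z : ℂ, z.im ≠ 0 →
      ∫ t : ℝ, (f t : ℂ) * ((1 + (t : ℂ) ^ 2) * (((t : ℂ) - z) ^ 2)⁻¹) = 0)
    (x y : ℝ) (hy : 0 < y) :
    ∫ t : ℝ, f t * ((1 + t ^ 2) * (y / ((t - x) ^ 2 + y ^ 2))) = ∫ s : ℝ, f s := by
  set z : ℂ := (x : ℂ) + (y : ℂ) * Complex.I with hzdef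
  have hzre : z.re = x := by simp [hzdef]
  have hzim : z.im = y := by simp [hzdef]
  have hzu : 0 < z.im := by rw [hzim]; exact hy
  have hzbar : ((starRingEnd ℂ) z).im < 0 := by simp [Complex.conj_im, hzim]; exact hy
  have hIlow : (-Complex.I).im < 0 := by simp
  -- split of the kernel
  have hsplit : ∀ t : ℝ, (f t : ℂ) * ((1 + (t : ℂ) ^ 2) *
        (((t : ℂ) - z)⁻¹ - ((t : ℂ) - (starRingEnd ℂ) z)⁻¹))
      = ((f t : ℂ) * ((1 + (t : ℂ) ^ 2) * (((t : ℂ) - z)⁻¹ - ((t : ℂ) - Complex.I)⁻¹))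
          + (f t : ℂ) * (2 * Complex.I))
        + (f t : ℂ) * ((1 + (t : ℂ) ^ 2) *
            (((t : ℂ) - -Complex.I)⁻¹ - ((t : ℂ) - (starRingEnd ℂ) z)⁻¹)) := by
    intro t
    rw [← midker t]
    ring
  have intA := int_diff hf.ofReal (ne_of_gt hzu) (by simp : (Complex.I).im ≠ 0)
  have intB : Integrable (fun t : ℝ => (f t : ℂ) * (2 * Complex.I)) :=
    hf.ofReal.mul_const _
  have intC := int_diff hf.ofReal (by simp : (-Complex.I).im ≠ 0) (ne_of_lt hzbar)
  have E1 : ∫ t : ℝ, (f t : ℂ) * ((1 + (t : ℂ) ^ 2) *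
        (((t : ℂ) - z)⁻¹ - ((t : ℂ) - (starRingEnd ℂ) z)⁻¹))
      = ((∫ s : ℝ, f s : ℝ) : ℂ) * (2 * Complex.I) := by
    rw [show (fun t : ℝ => (f t : ℂ) * ((1 + (t : ℂ) ^ 2) *
        (((t : ℂ) - z)⁻¹ - ((t : ℂ) - (starRingEnd ℂ) z)⁻¹))) = _ from funext hsplit]
    have intA' : Integrable (fun t : ℝ => (f t : ℂ) * ((1 + (t : ℂ) ^ 2) *
        (((t : ℂ) - z)⁻¹ - ((t : ℂ) - Complex.I)⁻¹))) := intA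
    have intB' : Integrable (fun t : ℝ => (f t : ℂ) * (2 * Complex.I)) := intB
    have intAB : Integrable (fun t : ℝ => (f t : ℂ) * ((1 + (t : ℂ) ^ 2) *
        (((t : ℂ) - z)⁻¹ - ((t : ℂ) - Complex.I)⁻¹)) + (f t : ℂ) * (2 * Complex.I)) :=
      intA'.add intB'
    have intC' : Integrable (fun t : ℝ => (f t : ℂ) * ((1 + (t : ℂ) ^ 2) *
        (((t : ℂ) - -Complex.I)⁻¹ - ((t : ℂ) - (starRingEnd ℂ) z)⁻¹))) := intC
    have hDzI : ∫ t : ℝ, ((f t : ℝ) : ℂ) * ((1 + (t : ℂ) ^ 2) *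
        (((t : ℂ) - z)⁻¹ - ((t : ℂ) - Complex.I)⁻¹)) = 0 :=
      stepD hf.ofReal h hzu (by simp : 0 < (Complex.I).im)
    rw [integral_add intAB intC', integral_add intA' intB',
      hDzI, stepDlow hf h hIlow hzbar, integral_mul_const]
    rw [zero_add, add_zero, integral_ofReal']
  -- kernel in real form
  have hker : ∀ t : ℝ, (f t : ℂ) * ((1 + (t : ℂ) ^ 2) *
        (((t : ℂ) - z)⁻¹ - ((t : ℂ) - (starRingEnd ℂ) z)⁻¹))
      = ((f t * ((1 + t ^ 2) * (y / ((t - x) ^ 2 + y ^ 2))) : ℝ) : ℂ) * (2 * Complex.I) := by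
    intro t
    have h1 : (t : ℂ) - z ≠ 0 := sub_ne (by rw [hzim]; exact ne_of_gt hy) t
    have h2 : (t : ℂ) - (starRingEnd ℂ) z ≠ 0 :=
      sub_ne (by simp [Complex.conj_im, hzim]; exact ne_of_gt hy) t
    have hden : ((t - x) ^ 2 + y ^ 2 : ℝ) ≠ 0 := by positivity
    have hconj : (t : ℂ) - (starRingEnd ℂ) z = (starRingEnd ℂ) ((t : ℂ) - z) := by
      rw [map_sub, Complex.conj_ofReal]
    have hprod : (((t : ℂ) - z) * ((t : ℂ) - (starRingEnd ℂ) z))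
        = (((t - x) ^ 2 + y ^ 2 : ℝ) : ℂ) := by
      rw [hconj, Complex.mul_conj, normSq_sub, hzre, hzim]
    have hsub : z - (starRingEnd ℂ) z = ((2 * y : ℝ) : ℂ) * Complex.I := by
      rw [Complex.sub_conj, hzim]
    rw [kdiff (ne_of_gt hzu) (ne_of_lt hzbar) t, hsub,
      show ((t : ℂ) - z)⁻¹ * ((t : ℂ) - (starRingEnd ℂ) z)⁻¹
        = ((((t - x) ^ 2 + y ^ 2 : ℝ) : ℂ))⁻¹ by rw [← mul_inv, hprod]]
    push_cast
    field_simp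
  have E2 : ∫ t : ℝ, (f t : ℂ) * ((1 + (t : ℂ) ^ 2) *
        (((t : ℂ) - z)⁻¹ - ((t : ℂ) - (starRingEnd ℂ) z)⁻¹))
      = ((∫ t : ℝ, f t * ((1 + t ^ 2) * (y / ((t - x) ^ 2 + y ^ 2))) : ℝ) : ℂ)
          * (2 * Complex.I) := by
    rw [show (fun t : ℝ => (f t : ℂ) * ((1 + (t : ℂ) ^ 2) *
        (((t : ℂ) - z)⁻¹ - ((t : ℂ) - (starRingEnd ℂ) z)⁻¹))) = _ from funext hker]
    rw [integral_mul_const, integral_ofReal']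
  have h2I : (2 * Complex.I : ℂ) ≠ 0 := by simp [Complex.I_ne_zero]
  have := E2.symm.trans E1
  have := mul_right_cancel₀ h2I this
  exact_mod_cast this


open Real in
lemma sub_formula (φ : ℝ → ℝ) {y : ℝ} (hy : 0 < y) (t : ℝ) :
    ∫ u : ℝ, φ (t + y * u) * (1 + u ^ 2)⁻¹
      = ∫ x : ℝ, φ x * (y / ((x - t) ^ 2 + y ^ 2)) := by
  set G : ℝ → ℝ := fun x => φ x * (y / ((x - t) ^ 2 + y ^ 2)) with hG
  have h1 : ∀ u : ℝ, φ (t + y * u) * (1 + u ^ 2)⁻¹ = y * G (y * u + t) := by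
    intro u
    rw [hG]
    simp only
    have hy2 : (y * u + t - t) ^ 2 + y ^ 2 = y ^ 2 * (1 + u ^ 2) := by ring
    rw [hy2, show t + y * u = y * u + t by ring]
    have hu : (0:ℝ) < 1 + u ^ 2 := by positivity
    field_simp
  simp_rw [h1]
  rw [MeasureTheory.integral_const_mul]
  have h2 : (∫ u : ℝ, G (y * u + t)) = |y⁻¹| • ∫ x : ℝ, G x := by
    have h3 := MeasureTheory.Measure.integral_comp_mul_left (fun v => G (v + t)) y
    rw [h3, integral_add_right_eq_self G t]
  rw [h2, smul_eq_mul, abs_of_pos (by positivity : (0:ℝ) < y⁻¹)]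
  field_simp

open Real in
lemma poisson_total {y : ℝ} (hy : 0 < y) (x : ℝ) :
    ∫ t : ℝ, y / ((t - x) ^ 2 + y ^ 2) = π := by
  have h := sub_formula (fun _ => 1) hy x
  simp only [one_mul] at h
  rw [← h, integral_univ_inv_one_add_sq]

lemma kboundR {x y : ℝ} (hy : 0 < y) {M : ℝ} (hx : |x| ≤ M) (t : ℝ) :
    (1 + t ^ 2) * (y / ((t - x) ^ 2 + y ^ 2)) ≤ y * max 2 ((1 + 2 * M ^ 2) / y ^ 2) := by
  have hden : (0:ℝ) < (t - x) ^ 2 + y ^ 2 := by positivity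
  set K := max 2 ((1 + 2 * M ^ 2) / y ^ 2) with hK
  have h1 : (2:ℝ) ≤ K := le_max_left _ _
  have h2 : (1 + 2 * M ^ 2) / y ^ 2 ≤ K := le_max_right _ _
  rw [div_le_iff₀ (by positivity : (0:ℝ) < y ^ 2)] at h2
  have hxM : x ^ 2 ≤ M ^ 2 := by
    nlinarith [pow_le_pow_left₀ (abs_nonneg x) hx 2, _root_.sq_abs x]
  have key : (1 + t ^ 2) ≤ K * ((t - x) ^ 2 + y ^ 2) := by
    nlinarith [sq_nonneg (t - 2 * x)]
  calc (1 + t ^ 2) * (y / ((t - x) ^ 2 + y ^ 2))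
      = y * ((1 + t ^ 2) / ((t - x) ^ 2 + y ^ 2)) := by ring
    _ ≤ y * K := by
        refine mul_le_mul_of_nonneg_left ?_ hy.le
        rw [div_le_iff₀ hden]
        linarith [key]


open Real in
/-- Step C: testing against a continuous compactly supported function. -/
lemma testphi {f : ℝ → ℝ} (hf : Integrable f)
    (hpoisson : ∀ x y : ℝ, 0 < y →
      ∫ t : ℝ, f t * ((1 + t ^ 2) * (y / ((t - x) ^ 2 + y ^ 2))) = ∫ s : ℝ, f s)
    (φ : ℝ → ℝ) (hφc : Continuous φ) (hφs : HasCompactSupport φ) :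
    π * ∫ t : ℝ, φ t * (f t * (1 + t ^ 2)) = (∫ s : ℝ, f s) * ∫ x : ℝ, φ x := by
  -- support bound
  obtain ⟨M₀, hM₀⟩ := hφs.isBounded.subset_closedBall 0
  set M : ℝ := max M₀ 1 with hM
  have hM1 : (1:ℝ) ≤ M := le_max_right _ _
  have hsupp : ∀ x : ℝ, φ x ≠ 0 → |x| ≤ M := by
    intro x hx
    have hx2 : x ∈ tsupport φ := subset_tsupport φ (by simpa using hx)
    have := hM₀ hx2
    rw [Metric.mem_closedBall, Real.dist_eq, sub_zero] at this
    exact this.trans (le_max_left _ _)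
  -- sup bound
  obtain ⟨B₀, hB₀⟩ := hφs.exists_bound_of_continuous hφc
  set B : ℝ := max B₀ 0 with hB
  have hBφ : ∀ x, |φ x| ≤ B := fun x => le_trans (by simpa using hB₀ x) (le_max_left _ _)
  have hB0 : 0 ≤ B := le_max_right _ _
  have hφint : Integrable φ := hφc.integrable_of_hasCompactSupport hφs
  -- the smoothed test function
  set Q : ℝ → ℝ → ℝ := fun y t => ∫ x : ℝ, φ x * (y / ((x - t) ^ 2 + y ^ 2)) with hQ
  -- Fubini identity
  have Sy : ∀ y : ℝ, 0 < y →
      ∫ t : ℝ, (f t * (1 + t ^ 2)) * Q y t = (∫ s : ℝ, f s) * ∫ x : ℝ, φ x := by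
    intro y hy
    set Cy : ℝ := y * max 2 ((1 + 2 * M ^ 2) / y ^ 2) with hCy
    have hker_cont : Continuous (fun p : ℝ × ℝ =>
        (1 + p.2 ^ 2) * (y / ((p.2 - p.1) ^ 2 + y ^ 2))) := by
      refine (continuous_const.add (continuous_snd.pow 2)).mul
        (continuous_const.div (((continuous_snd.sub continuous_fst).pow 2).add continuous_const)
          (fun p => by positivity))
    have hGm : AEStronglyMeasurable
        (Function.uncurry fun x t => φ x * (f t * ((1 + t ^ 2) * (y / ((t - x) ^ 2 + y ^ 2)))))
        (volume.prod volume) := by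
      have h1 : AEStronglyMeasurable (fun p : ℝ × ℝ => φ p.1) (volume.prod volume) :=
        (hφc.comp continuous_fst).aestronglyMeasurable
      have h2 : AEStronglyMeasurable (fun p : ℝ × ℝ => f p.2) (volume.prod volume) :=
        hf.aestronglyMeasurable.comp_snd
      exact h1.mul (h2.mul hker_cont.aestronglyMeasurable)
    have hGb : ∀ p : ℝ × ℝ,
        ‖φ p.1 * (f p.2 * ((1 + p.2 ^ 2) * (y / ((p.2 - p.1) ^ 2 + y ^ 2))))‖
          ≤ ‖φ p.1‖ * (Cy * ‖f p.2‖) := by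
      rintro ⟨x, t⟩
      by_cases hx : φ x = 0
      · simp only [hx, zero_mul, norm_zero]
        positivity
      · have hxM := hsupp x hx
        have hkb := kboundR hy hxM t
        have hker_nonneg : 0 ≤ (1 + t ^ 2) * (y / ((t - x) ^ 2 + y ^ 2)) := by positivity
        simp only [norm_mul, Real.norm_eq_abs]
        rw [_root_.abs_of_nonneg (by positivity : (0:ℝ) ≤ 1 + t ^ 2),
          _root_.abs_of_nonneg (by positivity : (0:ℝ) ≤ y / ((t - x) ^ 2 + y ^ 2))]
        calc |φ x| * (|f t| * ((1 + t ^ 2) * (y / ((t - x) ^ 2 + y ^ 2))))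
            ≤ |φ x| * (|f t| * Cy) := by
              refine mul_le_mul_of_nonneg_left
                (mul_le_mul_of_nonneg_left hkb (abs_nonneg _)) (abs_nonneg _)
          _ = |φ x| * (Cy * |f t|) := by ring
    have hGint : Integrable
        (Function.uncurry fun x t => φ x * (f t * ((1 + t ^ 2) * (y / ((t - x) ^ 2 + y ^ 2)))))
        (volume.prod volume) := by
      refine (Integrable.mono' ?_ hGm (ae_of_all _ hGb))
      exact Integrable.mul_prod hφint.norm ((hf.norm).const_mul Cy)
    have hswap := MeasureTheory.integral_integral_swap hGint
    -- evaluate the lhs of hswap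
    have hlhs : (∫ x : ℝ, ∫ t : ℝ, φ x * (f t * ((1 + t ^ 2) * (y / ((t - x) ^ 2 + y ^ 2)))))
        = (∫ x : ℝ, φ x) * ∫ s : ℝ, f s := by
      rw [show (fun x : ℝ => ∫ t : ℝ, φ x * (f t * ((1 + t ^ 2) * (y / ((t - x) ^ 2 + y ^ 2)))))
          = fun x : ℝ => φ x * ∫ s : ℝ, f s from ?_]
      · rw [MeasureTheory.integral_mul_const]
      · funext x
        rw [MeasureTheory.integral_const_mul, hpoisson x y hy]
    -- evaluate the rhs of hswap
    have hrhs : (∫ t : ℝ, ∫ x : ℝ, φ x * (f t * ((1 + t ^ 2) * (y / ((t - x) ^ 2 + y ^ 2)))))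
        = ∫ t : ℝ, (f t * (1 + t ^ 2)) * Q y t := by
      congr 1
      funext t
      have : (fun x : ℝ => φ x * (f t * ((1 + t ^ 2) * (y / ((t - x) ^ 2 + y ^ 2)))))
          = fun x : ℝ => (f t * (1 + t ^ 2)) * (φ x * (y / ((x - t) ^ 2 + y ^ 2))) := by
        funext x
        rw [show (x - t) ^ 2 = (t - x) ^ 2 by ring]
        ring
      rw [this, MeasureTheory.integral_const_mul]
    rw [hrhs] at hswap
    rw [← hswap, hlhs, mul_comm]
  -- continuity of the smoothed function
  have hQcont : ∀ y : ℝ, 0 < y → Continuous (Q y) := by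
    intro y hy
    have hrw : (Q y) = fun t => ∫ u : ℝ, φ (t + y * u) * (1 + u ^ 2)⁻¹ := by
      funext t
      rw [hQ]
      simp only
      rw [sub_formula φ hy t]
    rw [hrw]
    refine continuous_of_dominated (bound := fun u => B * (1 + u ^ 2)⁻¹) ?_ ?_ ?_ ?_
    · intro t
      exact ((hφc.comp (continuous_const.add (continuous_const.mul continuous_id))).mul
        ((continuous_const.add (continuous_id.pow 2)).inv₀
          (fun u => by simp only [Pi.add_apply, Pi.pow_apply, id]; positivity))).aestronglyMeasurable
    · intro t
      filter_upwards with u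
      rw [norm_mul, Real.norm_of_nonneg (by positivity : (0:ℝ) ≤ (1 + u ^ 2)⁻¹),
        Real.norm_eq_abs]
      exact mul_le_mul_of_nonneg_right (hBφ _) (by positivity)
    · exact integrable_inv_one_add_sq.const_mul B
    · filter_upwards with u
      exact (hφc.comp (continuous_id.add continuous_const)).mul continuous_const
  -- uniform bound
  set Iφ : ℝ := ∫ x : ℝ, |φ x| with hIφ
  have hIφ0 : 0 ≤ Iφ := integral_nonneg (fun x => abs_nonneg _)
  set Cφ : ℝ := max ((1 + (2 * M + 2) ^ 2) * (B * π)) (8 * Iφ) with hCφ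
  have hQbound : ∀ y : ℝ, 0 < y → y ≤ 1 → ∀ t : ℝ, (1 + t ^ 2) * |Q y t| ≤ Cφ := by
    intro y hy hy1 t
    by_cases ht : |t| ≤ 2 * M + 2
    · have h1 : |Q y t| ≤ B * π := by
        rw [hQ]
        simp only
        rw [← sub_formula φ hy t, ← Real.norm_eq_abs]
        have hle := norm_integral_le_of_norm_le (μ := volume)
          (f := fun u : ℝ => φ (t + y * u) * (1 + u ^ 2)⁻¹)
          (integrable_inv_one_add_sq.const_mul B) (ae_of_all _ (fun u => by
            rw [norm_mul, Real.norm_of_nonneg (by positivity : (0:ℝ) ≤ (1 + u ^ 2)⁻¹),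
              Real.norm_eq_abs]
            exact mul_le_mul_of_nonneg_right (hBφ _) (by positivity)))
        rwa [MeasureTheory.integral_const_mul, integral_univ_inv_one_add_sq] at hle
      have ht2 : t ^ 2 ≤ (2 * M + 2) ^ 2 := by
        nlinarith [pow_le_pow_left₀ (abs_nonneg t) ht 2, _root_.sq_abs t, abs_nonneg t]
      calc (1 + t ^ 2) * |Q y t| ≤ (1 + (2 * M + 2) ^ 2) * (B * π) := by
            refine mul_le_mul (by linarith) h1 (abs_nonneg _) (by nlinarith [hM1])
        _ ≤ Cφ := le_max_left _ _
    · push_neg at ht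
      have ht2 : 1 ≤ t ^ 2 := by nlinarith [hM1, _root_.sq_abs t, abs_nonneg t]
      have ht2' : (0:ℝ) < t ^ 2 := by linarith
      have h1 : |Q y t| ≤ Iφ * (4 / t ^ 2) := by
        rw [hQ]
        simp only
        rw [← Real.norm_eq_abs]
        have hle := norm_integral_le_of_norm_le (μ := volume)
          (f := fun x : ℝ => φ x * (y / ((x - t) ^ 2 + y ^ 2)))
          (g := fun x : ℝ => |φ x| * (4 / t ^ 2))
          (hφint.norm.mul_const _) (ae_of_all _ (fun x => ?_))
        · rwa [MeasureTheory.integral_mul_const] at hle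
        · by_cases hx : φ x = 0
          · simp only [hx, zero_mul, norm_zero, abs_zero]
            positivity
          · have hxM := hsupp x hx
            have hd : |t| - M ≤ |x - t| := by
              have h3 := abs_sub_abs_le_abs_sub t x
              rw [abs_sub_comm t x] at h3
              linarith
            have hd2 : t ^ 2 / 4 ≤ (x - t) ^ 2 := by
              have h4 : |t| / 2 ≤ |x - t| := by linarith [hM1]
              nlinarith [_root_.sq_abs (x - t), _root_.sq_abs t, abs_nonneg (x - t),
                abs_nonneg t]
            rw [norm_mul, Real.norm_eq_abs, Real.norm_eq_abs,
              _root_.abs_of_nonneg (by positivity : (0:ℝ) ≤ y / ((x - t) ^ 2 + y ^ 2))]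
            refine mul_le_mul_of_nonneg_left ?_ (abs_nonneg _)
            rw [div_le_div_iff₀ (by positivity) ht2']
            nlinarith [sq_nonneg y, hy.le, hy1]
      calc (1 + t ^ 2) * |Q y t| ≤ (1 + t ^ 2) * (Iφ * (4 / t ^ 2)) :=
            mul_le_mul_of_nonneg_left h1 (by positivity)
        _ = 4 * Iφ * ((1 + t ^ 2) / t ^ 2) := by ring
        _ ≤ 8 * Iφ := by
            have h5 : (1 + t ^ 2) / t ^ 2 ≤ 2 := by
              rw [div_le_iff₀ ht2']
              linarith
            nlinarith [hIφ0]
        _ ≤ Cφ := le_max_right _ _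
  -- the sequence of scales
  have hy_n : ∀ n : ℕ, (0:ℝ) < 1 / ((n : ℝ) + 1) := fun n => by positivity
  have hy_n1 : ∀ n : ℕ, (1:ℝ) / ((n : ℝ) + 1) ≤ 1 := fun n => by
    rw [div_le_one (by positivity)]
    linarith [(Nat.cast_nonneg n : (0:ℝ) ≤ (n : ℝ))]
  -- pointwise limit
  have hQlim : ∀ t : ℝ, Tendsto (fun n : ℕ => Q (1 / ((n : ℝ) + 1)) t) atTop
      (nhds (φ t * π)) := by
    intro t
    have hrw : ∀ n : ℕ, Q (1 / ((n : ℝ) + 1)) t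
        = ∫ u : ℝ, φ (t + (1 / ((n : ℝ) + 1)) * u) * (1 + u ^ 2)⁻¹ := by
      intro n
      rw [hQ]
      simp only
      rw [← sub_formula φ (hy_n n) t]
    simp_rw [hrw]
    have hlim := tendsto_integral_of_dominated_convergence (μ := volume)
      (F := fun (n : ℕ) (u : ℝ) => φ (t + (1 / ((n : ℝ) + 1)) * u) * (1 + u ^ 2)⁻¹)
      (f := fun u : ℝ => φ t * (1 + u ^ 2)⁻¹)
      (bound := fun u => B * (1 + u ^ 2)⁻¹)
      (fun n => ((hφc.comp (continuous_const.add (continuous_const.mul continuous_id))).mul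
        ((continuous_const.add (continuous_id.pow 2)).inv₀
          (fun u => by simp only [Pi.add_apply, Pi.pow_apply, id]; positivity))).aestronglyMeasurable)
      (integrable_inv_one_add_sq.const_mul B)
      (fun n => ae_of_all _ (fun u => by
        rw [norm_mul, Real.norm_of_nonneg (by positivity : (0:ℝ) ≤ (1 + u ^ 2)⁻¹),
          Real.norm_eq_abs]
        exact mul_le_mul_of_nonneg_right (hBφ _) (by positivity)))
      (ae_of_all _ (fun u => by
        refine Tendsto.mul_const _ ?_
        have h0 : Tendsto (fun n : ℕ => 1 / ((n : ℝ) + 1)) atTop (nhds 0) :=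
          tendsto_one_div_add_atTop_nhds_zero_nat
        have h1 : Tendsto (fun n : ℕ => t + (1 / ((n : ℝ) + 1)) * u) atTop (nhds t) := by
          have := tendsto_const_nhds (x := t) (f := atTop (α := ℕ)) |>.add (h0.mul_const u)
          simpa using this
        exact ((hφc.tendsto t).comp h1)))
    rw [MeasureTheory.integral_const_mul, integral_univ_inv_one_add_sq] at hlim
    simpa using hlim
  -- dominated convergence for the main integral
  have hTend : Tendsto (fun n : ℕ => ∫ t : ℝ, (f t * (1 + t ^ 2)) * Q (1 / ((n : ℝ) + 1)) t)
      atTop (nhds (∫ t : ℝ, (f t * (1 + t ^ 2)) * (φ t * π))) := by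
    refine tendsto_integral_of_dominated_convergence (bound := fun t => ‖f t‖ * Cφ) ?_ ?_ ?_ ?_
    · intro n
      exact (hf.aestronglyMeasurable.mul
        ((continuous_const.add (continuous_id.pow 2)).aestronglyMeasurable)).mul
        ((hQcont _ (hy_n n)).aestronglyMeasurable)
    · exact hf.norm.mul_const Cφ
    · intro n
      filter_upwards with t
      rw [norm_mul, norm_mul, Real.norm_of_nonneg (by positivity : (0:ℝ) ≤ 1 + t ^ 2),
        Real.norm_eq_abs (Q _ t), mul_assoc]
      exact mul_le_mul_of_nonneg_left (hQbound _ (hy_n n) (hy_n1 n) t) (norm_nonneg _)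
    · exact ae_of_all _ (fun t => Tendsto.const_mul _ (hQlim t))
  have hconstseq : Tendsto (fun n : ℕ => ∫ t : ℝ, (f t * (1 + t ^ 2)) * Q (1 / ((n : ℝ) + 1)) t)
      atTop (nhds ((∫ s : ℝ, f s) * ∫ x : ℝ, φ x)) := by
    have hcs : (fun n : ℕ => ∫ t : ℝ, (f t * (1 + t ^ 2)) * Q (1 / ((n : ℝ) + 1)) t)
        = fun _ => (∫ s : ℝ, f s) * ∫ x : ℝ, φ x := funext fun n => Sy _ (hy_n n)
    rw [hcs]
    exact tendsto_const_nhds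
  have hfin := tendsto_nhds_unique hTend hconstseq
  rw [show (fun t : ℝ => (f t * (1 + t ^ 2)) * (φ t * π))
      = fun t : ℝ => π * (φ t * (f t * (1 + t ^ 2))) from funext fun t => by ring,
    MeasureTheory.integral_const_mul] at hfin
  exact hfin


open Real in
lemma key {f : ℝ → ℝ} (hf : Integrable f)
    (h : ∀ z : ℂ, z.im ≠ 0 →
      ∫ t : ℝ, (f t : ℂ) * ((1 + (t : ℂ) ^ 2) * (((t : ℂ) - z) ^ 2)⁻¹) = 0) :
    ∀ᵐ t : ℝ ∂volume, f t * (1 + t ^ 2) = (∫ s : ℝ, f s) / π := by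
  have hpoisson : ∀ x y : ℝ, 0 < y →
      ∫ t : ℝ, f t * ((1 + t ^ 2) * (y / ((t - x) ^ 2 + y ^ 2))) = ∫ s : ℝ, f s :=
    fun x y hy => poisson hf h x y hy
  set c : ℝ := (∫ s : ℝ, f s) / π with hc
  have hπ : (0:ℝ) < π := Real.pi_pos
  have hloc1 : LocallyIntegrable (fun t : ℝ => f t * (1 + t ^ 2)) volume := by
    rw [locallyIntegrable_iff]
    intro k hk
    obtain ⟨r, hr⟩ := hk.isBounded.subset_closedBall 0
    refine Integrable.mono' ((hf.restrict.norm).const_mul (1 + r ^ 2)) ?_ ?_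
    · exact (hf.aestronglyMeasurable.mul
        ((continuous_const.add (continuous_id.pow 2)).aestronglyMeasurable)).restrict
    · rw [ae_restrict_iff' hk.measurableSet]
      refine ae_of_all _ (fun t ht => ?_)
      have htr : |t| ≤ r := by
        have h2 := hr ht
        rwa [Metric.mem_closedBall, Real.dist_eq, sub_zero] at h2
      rw [norm_mul, Real.norm_of_nonneg (by positivity : (0:ℝ) ≤ 1 + t ^ 2),
        mul_comm (1 + r ^ 2)]
      refine mul_le_mul_of_nonneg_left ?_ (norm_nonneg _)
      nlinarith [pow_le_pow_left₀ (abs_nonneg t) htr 2, _root_.sq_abs t]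
  have hloc : LocallyIntegrable (fun t : ℝ => f t * (1 + t ^ 2) - c) volume :=
    hloc1.sub (locallyIntegrable_const c)
  have hzero : ∀ᵐ t : ℝ ∂volume, f t * (1 + t ^ 2) - c = 0 := by
    apply ae_eq_zero_of_integral_contDiff_smul_eq_zero hloc
    intro φ hφd hφs
    have hφc : Continuous φ := hφd.continuous
    have hφint : Integrable φ := hφc.integrable_of_hasCompactSupport hφs
    have htest := testphi hf hpoisson φ hφc hφs
    have hint1 : Integrable (fun x : ℝ => φ x * (f x * (1 + x ^ 2))) := by
      have hb : HasCompactSupport (fun x : ℝ => φ x * (1 + x ^ 2)) := hφs.mul_right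
      obtain ⟨C, hC⟩ := hb.exists_bound_of_continuous
        (hφc.mul (continuous_const.add (continuous_pow 2)))
      have h3 := Integrable.bdd_mul hf
        ((hφc.mul (continuous_const.add (continuous_pow 2))).aestronglyMeasurable) (ae_of_all _ hC)
      exact h3.congr (ae_of_all _ (fun x => by simp only [Pi.mul_apply, Pi.add_apply]; ring))
    have hint2 : Integrable (fun x : ℝ => φ x * c) := hφint.mul_const c
    have hsimp : (fun x : ℝ => φ x • (f x * (1 + x ^ 2) - c))
        = fun x : ℝ => φ x * (f x * (1 + x ^ 2)) - φ x * c := by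
      funext x
      simp only [smul_eq_mul]
      ring
    rw [hsimp, integral_sub hint1 hint2, MeasureTheory.integral_mul_const]
    have h4 : ∫ t : ℝ, φ t * (f t * (1 + t ^ 2)) = (∫ s : ℝ, f s) * (∫ x : ℝ, φ x) / π := by
      rw [eq_div_iff hπ.ne', mul_comm]
      exact htest
    rw [h4, hc]
    ring
  filter_upwards [hzero] with t ht
  linarith [ht]

end PDAux

namespace PD

variable (H : Type*) [NormedAddCommGroup H] [InnerProductSpace ℂ H] [CompleteSpace H]

variable {H}

/-- If two densely defined closed operators have trace class resolvent
difference and a real-valued function `ξ` (resp. `ξ'`) in `L¹(ℝ, dt/(1+t²))` satisfies the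
trace formula for the pair, then `ξ - ξ'` is a.e. equal to a real constant. -/
theorem statement_1 {H : Type*} [NormedAddCommGroup H] [InnerProductSpace ℂ H]
    [CompleteSpace H]
    (T T' : H →ₗ.[ℂ] H)
    (hTd : IsDenselyDefined T) (hT'd : IsDenselyDefined T')
    (hTc : T.IsClosed) (hT'c : T'.IsClosed)
    (R R' : ℂ → H →L[ℂ] H)
    (hR : ∀ z : ℂ, z.im ≠ 0 → IsResolventAt T z (R z))
    (hR' : ∀ z : ℂ, z.im ≠ 0 → IsResolventAt T' z (R' z))
    (ζ : ℂ) (hζ : ζ.im ≠ 0) (htc : IsTraceClass (R' ζ - R ζ))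
    (ξ ξ' : ℝ → ℝ)
    (hξint : Integrable (fun t : ℝ => ξ t / (1 + t ^ 2)))
    (hξ'int : Integrable (fun t : ℝ => ξ' t / (1 + t ^ 2)))
    (htrace : ∀ z : ℂ, z.im ≠ 0 →
      trace (R' z - R z)
        = -(1 / (Real.pi : ℂ)) * ∫ t : ℝ, (ξ t : ℂ) / (((t : ℂ) - z) ^ 2))
    (htrace' : ∀ z : ℂ, z.im ≠ 0 →
      trace (R' z - R z)
        = -(1 / (Real.pi : ℂ)) * ∫ t : ℝ, (ξ' t : ℂ) / (((t : ℂ) - z) ^ 2)) :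
    ∃ c : ℝ, ∀ᵐ t : ℝ ∂volume, ξ t - ξ' t = c := by
  classical
  have hπC : -(1 / (Real.pi : ℂ)) ≠ 0 := by
    simp [Complex.ofReal_ne_zero, Real.pi_ne_zero]
  set f : ℝ → ℝ := fun t => (ξ t - ξ' t) / (1 + t ^ 2) with hfdef
  have hfint : MeasureTheory.Integrable f := by
    have h0 := hξint.sub hξ'int
    refine h0.congr (MeasureTheory.ae_of_all _ (fun t => ?_))
    simp only [Pi.sub_apply]
    rw [hfdef]
    simp only
    rw [sub_div]
  have hker : ∀ (g : ℝ → ℝ), Integrable (fun t : ℝ => g t / (1 + t ^ 2)) →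
      ∀ z : ℂ, z.im ≠ 0 →
        MeasureTheory.Integrable (fun t : ℝ => (g t : ℂ) / (((t : ℂ) - z) ^ 2)) := by
    intro g hg z hz
    have h1 : ∀ t : ℝ, (g t : ℂ) / (((t : ℂ) - z) ^ 2)
        = ((g t / (1 + t ^ 2) : ℝ) : ℂ) * ((1 + (t : ℂ) ^ 2) * (((t : ℂ) - z) ^ 2)⁻¹) := by
      intro t
      have hWc : ((1 : ℂ) + (t : ℂ) ^ 2) ≠ 0 := by
        have : ((1 + t ^ 2 : ℝ) : ℂ) ≠ 0 := by
          exact_mod_cast (by positivity : (1 + t ^ 2 : ℝ) ≠ 0)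
        rwa [show ((1 + t ^ 2 : ℝ) : ℂ) = (1 : ℂ) + (t : ℂ) ^ 2 by push_cast; ring] at this
      have hz2 : ((t : ℂ) - z) ≠ 0 := PDAux.sub_ne hz t
      push_cast
      field_simp
    rw [funext h1]
    exact PDAux.int_sq hg.ofReal hz
  have H : ∀ z : ℂ, z.im ≠ 0 →
      ∫ t : ℝ, (f t : ℂ) * ((1 + (t : ℂ) ^ 2) * (((t : ℂ) - z) ^ 2)⁻¹) = 0 := by
    intro z hz
    have h3 : ∫ t : ℝ, (ξ t : ℂ) / (((t : ℂ) - z) ^ 2)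
        = ∫ t : ℝ, (ξ' t : ℂ) / (((t : ℂ) - z) ^ 2) :=
      mul_left_cancel₀ hπC ((htrace z hz).symm.trans (htrace' z hz))
    have h4 : ∀ t : ℝ, (f t : ℂ) * ((1 + (t : ℂ) ^ 2) * (((t : ℂ) - z) ^ 2)⁻¹)
        = (ξ t : ℂ) / (((t : ℂ) - z) ^ 2) - (ξ' t : ℂ) / (((t : ℂ) - z) ^ 2) := by
      intro t
      rw [hfdef]
      simp only
      have hWc : ((1 : ℂ) + (t : ℂ) ^ 2) ≠ 0 := by
        have : ((1 + t ^ 2 : ℝ) : ℂ) ≠ 0 := by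
          exact_mod_cast (by positivity : (1 + t ^ 2 : ℝ) ≠ 0)
        rwa [show ((1 + t ^ 2 : ℝ) : ℂ) = (1 : ℂ) + (t : ℂ) ^ 2 by push_cast; ring] at this
      have hz2 : ((t : ℂ) - z) ≠ 0 := PDAux.sub_ne hz t
      push_cast
      field_simp
    rw [funext h4, MeasureTheory.integral_sub (hker ξ hξint z hz) (hker ξ' hξ'int z hz),
      h3, sub_self]
  have hkey := PDAux.key hfint H
  refine ⟨(∫ s : ℝ, f s) / Real.pi, ?_⟩
  filter_upwards [hkey] with t ht
  have hW : ((1:ℝ) + t ^ 2) ≠ 0 := by positivity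
  have h5 : ξ t - ξ' t = f t * (1 + t ^ 2) := by
    rw [hfdef]
    simp only
    field_simp
  rw [h5, ht]



end PD
end
end

section
/- Let H and H' be maximal accumulative operators on a separable Hilbert space 𝔥 and V a trace class operator on 𝔥 such that iy ∈ ρ(H) ∩ ρ(H') for all sufficiently large y > 0. Then lim_{y→∞} y² · tr((H'−iy)⁻¹ V (H−iy)⁻¹) = −tr(V). -/
noncomputable section
open scoped InnerProductSpace ComplexConjugate
open MeasureTheory Filter

namespace PD

variable (H : Type*) [NormedAddCommGroup H] [InnerProductSpace ℂ H] [CompleteSpace H]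

variable {H}

lemma hasSum_inner_sq (u : H) :
    HasSum (fun i : hbIdx H => ‖⟪(hb H i : H), u⟫_ℂ‖ ^ 2) (‖u‖ ^ 2) := by
  have h := ((hb H).hasSum_inner_mul_inner u u).mapL Complex.reCLM
  have h2 : (fun i : hbIdx H => Complex.reCLM (⟪u, (hb H i : H)⟫_ℂ * ⟪(hb H i : H), u⟫_ℂ))
      = fun i : hbIdx H => ‖⟪(hb H i : H), u⟫_ℂ‖ ^ 2 := by
    funext i
    rw [show ⟪u, (hb H i : H)⟫_ℂ = conj ⟪(hb H i : H), u⟫_ℂ from (inner_conj_symm _ _).symm]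
    set z := ⟪(hb H i : H), u⟫_ℂ
    simp only [Complex.reCLM_apply]
    rw [mul_comm, Complex.mul_conj, Complex.ofReal_re, ← Complex.sq_norm]
  have h3 : Complex.reCLM ⟪u, u⟫_ℂ = ‖u‖ ^ 2 := by
    simpa using inner_self_eq_norm_sq (𝕜 := ℂ) u
  rw [h2, h3] at h
  exact h

lemma norm_inner_adjoint (X : H →L[ℂ] H) (v w : H) :
    ‖⟪v, (ContinuousLinearMap.adjoint X) w⟫_ℂ‖ = ‖⟪w, X v⟫_ℂ‖ := by
  rw [ContinuousLinearMap.adjoint_inner_right,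
    show ⟪X v, w⟫_ℂ = conj ⟪w, X v⟫_ℂ from (inner_conj_symm _ _).symm, RCLike.norm_conj]

lemma summable_pair {X : H →L[ℂ] H} (hX : IsHS X) :
    Summable fun p : hbIdx H × hbIdx H => ‖⟪(hb H p.2 : H), X (hb H p.1)⟫_ℂ‖ ^ 2 := by
  rw [summable_prod_of_nonneg (fun p => by positivity)]
  refine ⟨fun i => (hasSum_inner_sq (X (hb H i))).summable, ?_⟩
  refine hX.congr fun i => ?_
  exact ((hasSum_inner_sq (X (hb H i))).tsum_eq).symm

set_option maxHeartbeats 1000000 in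
lemma IsHS.adjoint {X : H →L[ℂ] H} (hX : IsHS X) :
    IsHS (ContinuousLinearMap.adjoint X) := by
  have h2 : Summable fun p : hbIdx H × hbIdx H =>
      ‖⟪(hb H p.2 : H), (ContinuousLinearMap.adjoint X) (hb H p.1)⟫_ℂ‖ ^ 2 := by
    have h1 := (summable_pair hX).prod_symm
    refine h1.congr fun p => ?_
    simp only [Prod.snd_swap, Prod.fst_swap, norm_inner_adjoint]
  have := ((summable_prod_of_nonneg (fun p => by positivity)).1 h2).2
  refine this.congr fun i => ?_
  exact (hasSum_inner_sq ((ContinuousLinearMap.adjoint X) (hb H i))).tsum_eq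

lemma IsHS.comp_left (S : H →L[ℂ] H) {B : H →L[ℂ] H} (hB : IsHS B) : IsHS (S.comp B) := by
  refine Summable.of_nonneg_of_le (fun i => by positivity) (fun i => ?_) (hB.mul_left (‖S‖^2))
  have := S.le_opNorm (B (hb H i))
  calc ‖(S.comp B) (hb H i)‖ ^ 2 = ‖S (B (hb H i))‖^2 := rfl
    _ ≤ (‖S‖ * ‖B (hb H i)‖)^2 := by
        apply pow_le_pow_left₀ (norm_nonneg _) this
    _ = ‖S‖^2 * ‖B (hb H i)‖^2 := by ring

lemma IsHS.comp_right {B : H →L[ℂ] H} (hB : IsHS B) (W : H →L[ℂ] H) : IsHS (B.comp W) := by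
  have h2 := ((hB.adjoint).comp_left (ContinuousLinearMap.adjoint W)).adjoint
  rwa [ContinuousLinearMap.adjoint_comp, ContinuousLinearMap.adjoint_adjoint,
    ContinuousLinearMap.adjoint_adjoint] at h2


lemma summable_g {X Y : H →L[ℂ] H} (hX : IsHS X) (hY : IsHS Y) :
    Summable fun p : hbIdx H × hbIdx H =>
      ⟪(hb H p.1 : H), X (hb H p.2)⟫_ℂ * ⟪(hb H p.2 : H), Y (hb H p.1)⟫_ℂ := by
  have hbnd : Summable fun p : hbIdx H × hbIdx H =>
      (‖⟪(hb H p.1 : H), X (hb H p.2)⟫_ℂ‖ ^ 2 + ‖⟪(hb H p.2 : H), Y (hb H p.1)⟫_ℂ‖ ^ 2) / 2 := by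
    refine Summable.div_const (Summable.add ?_ (summable_pair hY)) 2
    refine (summable_pair hX).prod_symm.congr fun p => ?_
    simp only [Prod.snd_swap, Prod.fst_swap]
  refine Summable.of_norm_bounded hbnd fun p => ?_
  rw [norm_mul]
  set a := ‖⟪(hb H p.1 : H), X (hb H p.2)⟫_ℂ‖
  set b := ‖⟪(hb H p.2 : H), Y (hb H p.1)⟫_ℂ‖
  have ha : 0 ≤ a := norm_nonneg _
  have hb : 0 ≤ b := norm_nonneg _
  nlinarith [sq_nonneg (a - b)]

lemma trace_comp_eq_tsum_prod {X Y : H →L[ℂ] H} (hX : IsHS X) (hY : IsHS Y) :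
    trace (X.comp Y) = ∑' p : hbIdx H × hbIdx H,
      ⟪(hb H p.1 : H), X (hb H p.2)⟫_ℂ * ⟪(hb H p.2 : H), Y (hb H p.1)⟫_ℂ := by
  have hrow : ∀ i : hbIdx H, Summable fun j : hbIdx H =>
      ⟪(hb H i : H), X (hb H j)⟫_ℂ * ⟪(hb H j : H), Y (hb H i)⟫_ℂ := by
    intro i
    refine ((hb H).hasSum_inner_mul_inner ((ContinuousLinearMap.adjoint X) (hb H i))
      (Y (hb H i))).summable.congr fun j => ?_
    rw [ContinuousLinearMap.adjoint_inner_left]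
  rw [Summable.tsum_prod' (summable_g hX hY) hrow]
  rw [trace]
  refine tsum_congr fun i => ?_
  have h1 : ⟪(hb H i : H), (X.comp Y) (hb H i)⟫_ℂ
      = ⟪(ContinuousLinearMap.adjoint X) (hb H i), Y (hb H i)⟫_ℂ := by
    rw [ContinuousLinearMap.comp_apply, ContinuousLinearMap.adjoint_inner_left]
  rw [h1, ← (hb H).tsum_inner_mul_inner ((ContinuousLinearMap.adjoint X) (hb H i)) (Y (hb H i))]
  refine tsum_congr fun j => ?_
  rw [ContinuousLinearMap.adjoint_inner_left]

lemma trace_comp_comm {X Y : H →L[ℂ] H} (hX : IsHS X) (hY : IsHS Y) :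
    trace (X.comp Y) = trace (Y.comp X) := by
  rw [trace_comp_eq_tsum_prod hX hY, trace_comp_eq_tsum_prod hY hX]
  rw [← (Equiv.prodComm (hbIdx H) (hbIdx H)).tsum_eq
    (fun p : hbIdx H × hbIdx H => ⟪(hb H p.1 : H), X (hb H p.2)⟫_ℂ * ⟪(hb H p.2 : H), Y (hb H p.1)⟫_ℂ)]
  refine tsum_congr fun p => ?_
  simp only [Equiv.prodComm_apply, Prod.fst_swap, Prod.snd_swap]
  ring

lemma trace_smul (c : ℂ) (S : H →L[ℂ] H) : trace (c • S) = c * trace S := by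
  rw [trace, trace, ← tsum_mul_left]
  exact tsum_congr fun i => by simp [inner_smul_right]

open Filter

lemma resolvent_norm_le {T : H →ₗ.[ℂ] H} (hacc : IsAccumulative T) {y : ℝ} (hy : 0 < y)
    {Ry : H →L[ℂ] H} (h : IsResolventAt T (Complex.I * y) Ry) (x : H) :
    y * ‖Ry x‖ ≤ ‖x‖ := by
  set f : T.domain := ⟨Ry x, h.mem x⟩ with hf
  have hx : T f - (Complex.I * y) • (Ry x) = x := h.right x
  have key := norm_sub_sq (𝕜 := ℂ) (E := H) (T f) ((Complex.I * (y:ℂ)) • (Ry x))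
  rw [hx] at key
  have hre : RCLike.re ⟪T f, (Complex.I * (y:ℂ)) • (Ry x)⟫_ℂ
      = - (y * (⟪T f, Ry x⟫_ℂ).im) := by
    rw [inner_smul_right]
    simp [Complex.mul_re, Complex.mul_im]
    try ring
  have him : 0 ≤ (⟪T f, Ry x⟫_ℂ).im := by
    have h1 := hacc f
    have h2 : ⟪T f, Ry x⟫_ℂ = conj ⟪(f : H), T f⟫_ℂ := by
      rw [inner_conj_symm]
    rw [h2, Complex.conj_im]
    linarith
  have hsm : ‖(Complex.I * (y:ℂ)) • (Ry x)‖ = y * ‖Ry x‖ := by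
    rw [norm_smul]
    simp [abs_of_pos hy]
  rw [hre, hsm] at key
  nlinarith [norm_nonneg x, norm_nonneg (Ry x), norm_nonneg (T f), sq_nonneg (‖T f‖), mul_nonneg hy.le (norm_nonneg (Ry x))]

lemma dense_domain {T : H →ₗ.[ℂ] H} (hT : IsMaxAccumulative T) :
    Dense (T.domain : Set H) := by
  obtain ⟨R1, h1⟩ := hT.2 Complex.I (by simp)
  rw [Submodule.dense_iff_topologicalClosure_eq_top, Submodule.topologicalClosure_eq_top_iff,
    Submodule.eq_bot_iff]
  intro u hu
  set f : T.domain := ⟨R1 u, h1.mem u⟩ with hf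
  have hx : T f - Complex.I • (R1 u) = u := h1.right u
  have hTf : T f = u + Complex.I • (R1 u) := by
    rw [sub_eq_iff_eq_add] at hx
    rw [hx]
  have h0 : ⟪(R1 u : H), u⟫_ℂ = 0 :=
    (Submodule.mem_orthogonal T.domain u).1 hu (R1 u) (h1.mem u)
  have him := hT.1 f
  rw [hTf, inner_add_right, inner_smul_right, show ((f : H) : H) = R1 u from rfl, h0,
    zero_add, inner_self_eq_norm_sq_to_K] at him
  have hnorm : ‖R1 u‖ ^ 2 ≤ 0 := by
    simpa [Complex.mul_im, ← Complex.ofReal_pow, Complex.ofReal_re] using him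
  have hR0 : R1 u = 0 := by
    have : ‖R1 u‖ = 0 := by nlinarith [norm_nonneg (R1 u)]
    exact norm_eq_zero.1 this
  have hf0 : f = 0 := Subtype.ext (by rw [show ((f : H)) = R1 u from rfl, hR0]; rfl)
  have : T f = 0 := by rw [hf0]; exact T.toFun.map_zero
  rw [this, hR0] at hx
  simpa using hx.symm

set_option linter.unusedSectionVars false in
lemma strong_limit {T : H →ₗ.[ℂ] H} (hacc : IsAccumulative T)
    (hd : Dense (T.domain : Set H)) {R : ℝ → H →L[ℂ] H} {y₀ : ℝ}
    (hR : ∀ y : ℝ, y₀ ≤ y → IsResolventAt T (Complex.I * y) (R y)) (x : H) :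
    Tendsto (fun y : ℝ => (y : ℂ) • R y x) atTop (nhds (Complex.I • x)) := by
  rw [Metric.tendsto_atTop]
  intro ε hε
  have hx : x ∈ closure (T.domain : Set H) := hd x
  rw [Metric.mem_closure_iff] at hx
  obtain ⟨fv, hfv, hdist⟩ := hx (ε / 3) (by positivity)
  set f : T.domain := ⟨fv, hfv⟩ with hfdef
  refine ⟨max (max y₀ 1) (3 * ‖T f‖ / ε + 1), fun y hy => ?_⟩
  have hy₀ : y₀ ≤ y := le_trans (le_trans (le_max_left _ _) (le_max_left _ _)) hy
  have hy1 : (1 : ℝ) ≤ y := le_trans (le_trans (le_max_right _ _) (le_max_left _ _)) hy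
  have hypos : (0 : ℝ) < y := lt_of_lt_of_le one_pos hy1
  have hyT : 3 * ‖T f‖ / ε + 1 ≤ y := le_trans (le_max_right _ _) hy
  have hres := hR y hy₀
  -- identity: R y (T f) - (I*y) • R y fv = fv
  have hid := hres.left f
  rw [map_sub, _root_.map_smul] at hid
  -- (y:ℂ) • R y fv = (-I) • R y (T f) + I • fv
  have hkey : (y : ℂ) • R y fv = (-Complex.I) • R y (T f) + Complex.I • fv := by
    rw [show ((f : H)) = fv from rfl] at hid
    have h2 : (Complex.I * y) • R y fv = R y (T f) - fv := by
      rw [sub_eq_iff_eq_add] at hid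
      rw [hid]; abel
    have h3 : (y : ℂ) • R y fv = (-Complex.I) • ((Complex.I * y) • R y fv) := by
      rw [smul_smul]
      congr 1
      rw [show -Complex.I * (Complex.I * y) = -(Complex.I * Complex.I) * y by ring,
        Complex.I_mul_I]
      ring
    rw [h3, h2, smul_sub]
    simp
  -- decomposition
  have hdec : (y : ℂ) • R y x - Complex.I • x
      = (y : ℂ) • R y (x - fv) + (-Complex.I) • R y (T f) + Complex.I • (fv - x) := by
    rw [map_sub (R y), smul_sub, hkey]
    rw [smul_sub]
    abel
  rw [dist_eq_norm, hdec]
  have hnormy : ‖(y : ℂ)‖ = y := by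
    rw [Complex.norm_real]
    exact abs_of_pos hypos
  have hb1 : ‖(y : ℂ) • R y (x - fv)‖ < ε / 3 := by
    rw [norm_smul, hnormy]
    have h4 := resolvent_norm_le hacc hypos hres (x - fv)
    have h5 : ‖x - fv‖ < ε / 3 := by rwa [dist_eq_norm] at hdist
    linarith
  have hb2 : ‖(-Complex.I) • R y (T f)‖ < ε / 3 := by
    rw [norm_smul]
    simp only [norm_neg, Complex.norm_I, one_mul]
    have h4 := resolvent_norm_le hacc hypos hres (T f)
    have h6 : 0 ≤ ‖R y (T f)‖ := norm_nonneg _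
    have h7 : 3 * ‖T f‖ ≤ (y - 1) * ε := (div_le_iff₀ hε).1 (by linarith)
    nlinarith [mul_pos hypos hε]
  have hb3 : ‖Complex.I • (fv - x)‖ < ε / 3 := by
    rw [norm_smul]
    simp only [Complex.norm_I, one_mul]
    have : ‖fv - x‖ < ε / 3 := by rwa [dist_comm, dist_eq_norm] at hdist
    linarith
  calc ‖(y : ℂ) • R y (x - fv) + (-Complex.I) • R y (T f) + Complex.I • (fv - x)‖
      ≤ ‖(y : ℂ) • R y (x - fv)‖ + ‖(-Complex.I) • R y (T f)‖ + ‖Complex.I • (fv - x)‖ :=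
        norm_add₃_le
    _ < ε := by linarith

set_option linter.unusedSectionVars false in
lemma strong_limit_comp {T T' : H →ₗ.[ℂ] H} (hacc : IsAccumulative T)
    (hd : Dense (T.domain : Set H)) (hacc' : IsAccumulative T')
    (hd' : Dense (T'.domain : Set H)) {R R' : ℝ → H →L[ℂ] H} {y₀ y₀' : ℝ}
    (hR : ∀ y : ℝ, y₀ ≤ y → IsResolventAt T (Complex.I * y) (R y))
    (hR' : ∀ y : ℝ, y₀' ≤ y → IsResolventAt T' (Complex.I * y) (R' y)) (v : H) :
    Tendsto (fun y : ℝ => (y : ℂ) • R y ((y : ℂ) • R' y v)) atTop (nhds (-v)) := by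
  have h1 := strong_limit hacc hd hR (Complex.I • v)
  have h2 := strong_limit hacc' hd' hR' v
  have hI : Complex.I • (Complex.I • v) = -v := by
    rw [smul_smul, Complex.I_mul_I, neg_one_smul]
  have hlim0 : Tendsto (fun y : ℝ => ‖(y : ℂ) • R' y v - Complex.I • v‖) atTop (nhds 0) := by
    have := (tendsto_sub_nhds_zero_iff.2 h2).norm
    simpa using this
  have hdiff : Tendsto
      (fun y : ℝ => (y : ℂ) • R y ((y : ℂ) • R' y v) - (y : ℂ) • R y (Complex.I • v))
      atTop (nhds 0) := by
    apply squeeze_zero_norm' ?_ hlim0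
    filter_upwards [Filter.eventually_ge_atTop (max y₀ 1)] with y hy
    have hy₀ : y₀ ≤ y := le_trans (le_max_left _ _) hy
    have hypos : (0 : ℝ) < y := lt_of_lt_of_le one_pos (le_trans (le_max_right _ _) hy)
    have hres := hR y hy₀
    have heq : (y : ℂ) • R y ((y : ℂ) • R' y v) - (y : ℂ) • R y (Complex.I • v)
        = (y : ℂ) • R y ((y : ℂ) • R' y v - Complex.I • v) := by
      rw [map_sub (R y), smul_sub]
    rw [heq, norm_smul, Complex.norm_real, Real.norm_eq_abs, abs_of_pos hypos]
    exact resolvent_norm_le hacc hypos hres _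
  have hsum := hdiff.add h1
  rw [zero_add] at hsum
  rw [show nhds (Complex.I • (Complex.I • v)) = nhds (-v) from by rw [hI]] at hsum
  refine hsum.congr fun y => ?_
  abel


/-- For maximal accumulative `H`, `H'` on a separable Hilbert space and a
trace class `V`, `lim_{y→∞} y² tr((H'-iy)⁻¹ V (H-iy)⁻¹) = -tr V`. -/
theorem statement_2 {H : Type*} [NormedAddCommGroup H] [InnerProductSpace ℂ H]
    [CompleteSpace H] [TopologicalSpace.SeparableSpace H]
    (T T' : H →ₗ.[ℂ] H) (hT : IsMaxAccumulative T) (hT' : IsMaxAccumulative T')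
    (V : H →L[ℂ] H) (hV : IsTraceClass V)
    (R R' : ℝ → H →L[ℂ] H) (y₀ : ℝ)
    (hR : ∀ y : ℝ, y₀ ≤ y → IsResolventAt T (Complex.I * y) (R y))
    (hR' : ∀ y : ℝ, y₀ ≤ y → IsResolventAt T' (Complex.I * y) (R' y)) :
    Tendsto (fun y : ℝ => (y : ℂ) ^ 2 * trace ((R' y).comp (V.comp (R y))))
      atTop (nhds (-(trace V))) := by
  classical
  obtain ⟨A, B, hA, hB, hVAB⟩ := hV
  have hdT : Dense (T.domain : Set H) := dense_domain hT
  have hdT' : Dense (T'.domain : Set H) := dense_domain hT'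
  have haT := hT.1
  have haT' := hT'.1
  set F : ℝ → hbIdx H → ℂ := fun y j =>
    ⟪(hb H j : H), ((B.comp ((y:ℂ) • R y)).comp (((y:ℂ) • R' y).comp A)) (hb H j)⟫_ℂ with hF
  have step1 : ∀ y : ℝ, (y : ℂ) ^ 2 * trace ((R' y).comp (V.comp (R y)))
      = ∑' j : hbIdx H, F y j := by
    intro y
    have hX : IsHS (((y:ℂ) • R' y).comp A) := hA.comp_left _
    have hY : IsHS (B.comp ((y:ℂ) • R y)) := hB.comp_right _
    have hop : (((y:ℂ) • R' y).comp A).comp (B.comp ((y:ℂ) • R y))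
        = ((y:ℂ)^2) • ((R' y).comp (V.comp (R y))) := by
      rw [hVAB]; ext x
      simp only [ContinuousLinearMap.comp_apply, ContinuousLinearMap.smul_apply,
        ContinuousLinearMap.map_smul]
      rw [smul_smul, pow_two]
    calc (y:ℂ)^2 * trace ((R' y).comp (V.comp (R y)))
        = trace (((y:ℂ)^2) • ((R' y).comp (V.comp (R y)))) := (trace_smul _ _).symm
      _ = trace ((((y:ℂ) • R' y).comp A).comp (B.comp ((y:ℂ) • R y))) := by rw [hop]
      _ = trace ((B.comp ((y:ℂ) • R y)).comp (((y:ℂ) • R' y).comp A)) := trace_comp_comm hX hY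
      _ = ∑' j : hbIdx H, F y j := rfl
  have hFw : ∀ y : ℝ, ∀ j : hbIdx H,
      F y j = ⟪(hb H j : H), B ((y:ℂ) • R y ((y:ℂ) • R' y (A (hb H j : H))))⟫_ℂ := by
    intro y j
    simp only [hF, ContinuousLinearMap.comp_apply, ContinuousLinearMap.smul_apply]
  have hptw : ∀ j : hbIdx H, Tendsto (fun y : ℝ => F y j) atTop
      (nhds (-⟪(hb H j : H), (B.comp A) (hb H j : H)⟫_ℂ)) := by
    intro j
    have hw := strong_limit_comp haT hdT haT' hdT' hR hR' (A (hb H j : H))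
    have hBw := (B.continuous.tendsto _).comp hw
    have hin := Filter.Tendsto.inner (𝕜 := ℂ) (tendsto_const_nhds (x := ((hb H j : H)))) hBw
    have hval : ⟪(hb H j : H), B (-(A (hb H j : H)))⟫_ℂ
        = -⟪(hb H j : H), (B.comp A) (hb H j : H)⟫_ℂ := by
      rw [map_neg, inner_neg_right, ContinuousLinearMap.comp_apply]
    rw [hval] at hin
    refine hin.congr fun y => ?_
    rw [hFw y j]
    rfl
  have hbdsum : Summable fun j : hbIdx H =>
      (‖(ContinuousLinearMap.adjoint B) (hb H j)‖ ^ 2 + ‖A (hb H j)‖ ^ 2) / 2 :=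
    Summable.div_const (Summable.add hB.adjoint hA) 2
  have hbd : ∀ᶠ y : ℝ in atTop, ∀ j : hbIdx H,
      ‖F y j‖ ≤ (‖(ContinuousLinearMap.adjoint B) (hb H j)‖ ^ 2 + ‖A (hb H j)‖ ^ 2) / 2 := by
    filter_upwards [Filter.eventually_ge_atTop (max (max y₀ y₀) 1)] with y hy
    intro j
    have hy₀ : y₀ ≤ y := le_trans (le_trans (le_max_left _ _) (le_max_left _ _)) hy
    have hypos : (0 : ℝ) < y := lt_of_lt_of_le one_pos (le_trans (le_max_right _ _) hy)
    have hres := hR y hy₀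
    have hres' := hR' y hy₀
    set v := A (hb H j : H) with hv
    set u := (y:ℂ) • R' y v with hu
    set w := (y:ℂ) • R y u with hwdef
    have hFval : F y j = ⟪(ContinuousLinearMap.adjoint B) (hb H j : H), w⟫_ℂ := by
      rw [hFw y j, ContinuousLinearMap.adjoint_inner_left]
    have hnu : ‖u‖ ≤ ‖v‖ := by
      rw [hu, norm_smul, Complex.norm_real, Real.norm_eq_abs, abs_of_pos hypos]
      exact resolvent_norm_le haT' hypos hres' v
    have hnw : ‖w‖ ≤ ‖v‖ := by
      rw [hwdef, norm_smul, Complex.norm_real, Real.norm_eq_abs, abs_of_pos hypos]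
      exact le_trans (resolvent_norm_le haT hypos hres u) hnu
    rw [hFval]
    have h1 : ‖⟪(ContinuousLinearMap.adjoint B) (hb H j : H), w⟫_ℂ‖
        ≤ ‖(ContinuousLinearMap.adjoint B) (hb H j : H)‖ * ‖w‖ := norm_inner_le_norm _ _
    have h2 : 0 ≤ ‖(ContinuousLinearMap.adjoint B) (hb H j : H)‖ := norm_nonneg _
    have h3 : 0 ≤ ‖w‖ := norm_nonneg _
    have h4 : 0 ≤ ‖v‖ := norm_nonneg _
    nlinarith [sq_nonneg (‖(ContinuousLinearMap.adjoint B) (hb H j : H)‖ - ‖v‖),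
      mul_le_mul_of_nonneg_left hnw h2]
  have hDC := tendsto_tsum_of_dominated_convergence hbdsum hptw hbd
  have hlimval : (∑' j : hbIdx H, -⟪(hb H j : H), (B.comp A) (hb H j : H)⟫_ℂ) = -(trace V) := by
    rw [tsum_neg, hVAB, ← trace_comp_comm hB hA]
    rfl
  rw [hlimval] at hDC
  refine hDC.congr fun y => ?_
  exact (step1 y).symm


end PD
end
end

section
/- Let A be a densely defined closed symmetric operator on a Hilbert space 𝔥 with boundary triplet Π = {ℋ, Γ₀, Γ₁} for A*, let M be the associated Weyl function and γ the γ-field, and let A_B := A*↾ker(Γ₁ − BΓ₀) for a closed operator B on ℋ. Assume z ∈ ρ(A₀) ∩ ρ(A_B) where A₀ := A*↾ker(Γ₀). If B' is another closed operator with dom(B') = dom(B), A_{B'} defined analogously, and z ∈ ρ(A_{B'}), then (A_{B'} − z)⁻¹ − (A_B − z)⁻¹ = γ(z)(B' − M(z))⁻¹(B − B')(B − M(z))⁻¹ γ(z̄)*. -/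
noncomputable section
open scoped InnerProductSpace ComplexConjugate
open MeasureTheory Filter

namespace PD

variable (H : Type*) [NormedAddCommGroup H] [InnerProductSpace ℂ H] [CompleteSpace H]

variable {H}

variable {𝓗 : Type*} [NormedAddCommGroup 𝓗] [InnerProductSpace ℂ 𝓗] [CompleteSpace 𝓗]

/-- A boundary triplet for the operator `S` (to be thought of as `A*`). -/
structure BoundaryTriplet (S : H →ₗ.[ℂ] H) (𝓗 : Type*) [NormedAddCommGroup 𝓗]
    [InnerProductSpace ℂ 𝓗] where
  Γ₀ : S.domain →ₗ[ℂ] 𝓗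
  Γ₁ : S.domain →ₗ[ℂ] 𝓗
  green : ∀ f g : S.domain, ⟪S f, (g : H)⟫_ℂ - ⟪(f : H), S g⟫_ℂ
      = ⟪Γ₁ f, Γ₀ g⟫_ℂ - ⟪Γ₀ f, Γ₁ g⟫_ℂ
  surj : ∀ h k : 𝓗, ∃ f : S.domain, Γ₀ f = h ∧ Γ₁ f = k

/-- `γ` is the value of the γ-field of the boundary triplet `bt` at the point `z`:
it is a topological isomorphism from `𝓗` onto `ker (S - z)` inverting `Γ₀`. -/
def IsGammaFieldAt (S : H →ₗ.[ℂ] H) (bt : BoundaryTriplet S 𝓗) (z : ℂ)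
    (γ : 𝓗 →L[ℂ] H) : Prop :=
  (∀ h : 𝓗, ∃ hd : γ h ∈ S.domain, S ⟨γ h, hd⟩ = z • γ h ∧ bt.Γ₀ ⟨γ h, hd⟩ = h) ∧
  ∀ f : S.domain, S f = z • (f : H) → γ (bt.Γ₀ f) = (f : H)

/-- `M` is the value of the Weyl function at `z`: `M z = Γ₁ ∘ γ z`. -/
def IsWeylAt (S : H →ₗ.[ℂ] H) (bt : BoundaryTriplet S 𝓗) (γ : 𝓗 →L[ℂ] H)
    (M : 𝓗 →L[ℂ] 𝓗) : Prop :=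
  ∀ (h : 𝓗) (hd : γ h ∈ S.domain), M h = bt.Γ₁ ⟨γ h, hd⟩

/-- `AB` is the restriction `A_B = S ↾ ker (Γ₁ - B Γ₀)` of `S`. -/
def IsRestrictionTo (S : H →ₗ.[ℂ] H) (bt : BoundaryTriplet S 𝓗) (Bop : 𝓗 →ₗ.[ℂ] 𝓗)
    (AB : H →ₗ.[ℂ] H) : Prop :=
  AB ≤ S ∧ ∀ f : S.domain,
    ((f : H) ∈ AB.domain ↔ ∃ hb : bt.Γ₀ f ∈ Bop.domain, bt.Γ₁ f = Bop ⟨bt.Γ₀ f, hb⟩)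

/-- `E` is the bounded inverse of `B - Mz` (with `B` a possibly unbounded operator). -/
def IsInverseOf (Bop : 𝓗 →ₗ.[ℂ] 𝓗) (Mz : 𝓗 →L[ℂ] 𝓗) (E : 𝓗 →L[ℂ] 𝓗) : Prop :=
  (∀ h : 𝓗, ∃ hd : E h ∈ Bop.domain, Bop ⟨E h, hd⟩ - Mz (E h) = h) ∧
  ∀ f : Bop.domain, E (Bop f - Mz (f : 𝓗)) = (f : 𝓗)

private lemma krein {H : Type*} [NormedAddCommGroup H] [InnerProductSpace ℂ H]
    [CompleteSpace H] {𝓗 : Type*} [NormedAddCommGroup 𝓗] [InnerProductSpace ℂ 𝓗]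
    [CompleteSpace 𝓗]
    {S : H →ₗ.[ℂ] H} (bt : BoundaryTriplet S 𝓗)
    {Bop : 𝓗 →ₗ.[ℂ] 𝓗} {AB A0 : H →ₗ.[ℂ] H}
    (hAB : IsRestrictionTo S bt Bop AB)
    (hA0 : A0 ≤ S ∧ ∀ f : S.domain, ((f : H) ∈ A0.domain ↔ bt.Γ₀ f = 0))
    {z : ℂ} {R0 : H →L[ℂ] H} (hR0 : IsResolventAt A0 z R0)
    {RB : H →L[ℂ] H} (hRB : IsResolventAt AB z RB)
    {γz γzbar : 𝓗 →L[ℂ] H} (hγz : IsGammaFieldAt S bt z γz)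
    (hγzbar : IsGammaFieldAt S bt ((starRingEnd ℂ) z) γzbar)
    {Mz : 𝓗 →L[ℂ] 𝓗} (hMz : IsWeylAt S bt γz Mz)
    {E : 𝓗 →L[ℂ] 𝓗} (hE : IsInverseOf Bop Mz E) (x : H) :
    RB x = R0 x + γz (E (ContinuousLinearMap.adjoint γzbar x)) := by
  set e := ContinuousLinearMap.adjoint γzbar x with he
  set u := E e with hu
  have h0A : R0 x ∈ A0.domain := hR0.mem x
  have h0S : R0 x ∈ S.domain := hA0.1.1 h0A
  set f0 : S.domain := ⟨R0 x, h0S⟩ with hf0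
  have hSf0 : S f0 = x + z • R0 x := by
    have hval : A0 ⟨R0 x, h0A⟩ = S f0 := hA0.1.2 (x := ⟨R0 x, h0A⟩) (y := f0) rfl
    have h2 := hR0.right x
    rw [hval] at h2
    exact eq_add_of_sub_eq h2
  have hΓ0f0 : bt.Γ₀ f0 = 0 := (hA0.2 f0).mp h0A
  have hΓ1f0 : bt.Γ₁ f0 = e := by
    apply ext_inner_right ℂ
    intro h
    obtain ⟨hd, hSg, hΓ0g⟩ := hγzbar.1 h
    have hg := bt.green f0 ⟨γzbar h, hd⟩
    rw [hΓ0g, hΓ0f0] at hg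
    simp only [inner_zero_left, sub_zero] at hg
    rw [← hg, hSf0, hSg]
    rw [he, ContinuousLinearMap.adjoint_inner_left]
    simp only [inner_add_left, inner_smul_left, inner_smul_right]
    ring
  obtain ⟨hdu, hSu, hΓ0u⟩ := hγz.1 u
  set g1 : S.domain := ⟨γz u, hdu⟩ with hg1
  have hΓ1g1 : bt.Γ₁ g1 = Mz u := (hMz u hdu).symm
  set f : S.domain := f0 + g1 with hf
  have hΓ0f : bt.Γ₀ f = u := by rw [hf, map_add, hΓ0f0, hΓ0u, zero_add]
  obtain ⟨h1, hBu⟩ := hE.1 e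
  have hBval : Bop ⟨u, h1⟩ = e + Mz u := eq_add_of_sub_eq hBu
  have hΓ1f : bt.Γ₁ f = Bop ⟨u, h1⟩ := by
    rw [hf, map_add, hΓ1f0, hΓ1g1, hBval]
  have hfAB : (f : H) ∈ AB.domain := by
    rw [hAB.2 f]
    refine ⟨hΓ0f ▸ h1, ?_⟩
    rw [hΓ1f]
    congr 1
    exact Subtype.ext hΓ0f.symm
  set fAB : AB.domain := ⟨(f : H), hfAB⟩ with hfABdef
  have hkey : AB fAB - z • (fAB : H) = x := by
    have hABf : AB fAB = S f := hAB.1.2 (x := fAB) (y := f) rfl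
    have hcoe : ((fAB : H) : H) = R0 x + γz u := rfl
    rw [hABf, hf, S.map_add f0 g1, hSf0, hSu, hcoe, smul_add]
    abel
  have hleft := hRB.left fAB
  rw [hkey] at hleft
  exact hleft

/-- Krein-type formula for the resolvent difference of two proper
extensions `A_{B'}`, `A_B` of a symmetric operator `A` in terms of the γ-field and the
Weyl function of a boundary triplet for `A* = S`:
`(A_{B'} - z)⁻¹ - (A_B - z)⁻¹ = γ(z)(B' - M(z))⁻¹(B - B')(B - M(z))⁻¹ γ(z̄)*`. -/
theorem statement_14 {H : Type*} [NormedAddCommGroup H] [InnerProductSpace ℂ H]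
    [CompleteSpace H] {𝓗 : Type*} [NormedAddCommGroup 𝓗] [InnerProductSpace ℂ 𝓗]
    [CompleteSpace 𝓗]
    (A S : H →ₗ.[ℂ] H) (hAd : IsDenselyDefined A) (hAc : A.IsClosed)
    (hAsym : IsSymmetricP A) (hS : S = A.adjoint)
    (bt : BoundaryTriplet S 𝓗)
    (Bop B'op : 𝓗 →ₗ.[ℂ] 𝓗) (hBc : Bop.IsClosed) (hB'c : B'op.IsClosed)
    (hdomBB' : Bop.domain = B'op.domain)
    (AB AB' A0 : H →ₗ.[ℂ] H)
    (hAB : IsRestrictionTo S bt Bop AB) (hAB' : IsRestrictionTo S bt B'op AB')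
    (hA0 : A0 ≤ S ∧ ∀ f : S.domain, ((f : H) ∈ A0.domain ↔ bt.Γ₀ f = 0))
    (z : ℂ)
    (R0 : H →L[ℂ] H) (hR0 : IsResolventAt A0 z R0)
    (RB RB' : H →L[ℂ] H) (hRB : IsResolventAt AB z RB) (hRB' : IsResolventAt AB' z RB')
    (γz γzbar : 𝓗 →L[ℂ] H)
    (hγz : IsGammaFieldAt S bt z γz)
    (hγzbar : IsGammaFieldAt S bt ((starRingEnd ℂ) z) γzbar)
    (Mz : 𝓗 →L[ℂ] 𝓗) (hMz : IsWeylAt S bt γz Mz)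
    (E E' : 𝓗 →L[ℂ] 𝓗)
    (hE : IsInverseOf Bop Mz E) (hE' : IsInverseOf B'op Mz E') :
    ∀ x : H,
      ∃ (h1 : E (ContinuousLinearMap.adjoint γzbar x) ∈ Bop.domain)
        (h2 : E (ContinuousLinearMap.adjoint γzbar x) ∈ B'op.domain),
      RB' x - RB x
        = γz (E' (Bop ⟨E (ContinuousLinearMap.adjoint γzbar x), h1⟩
            - B'op ⟨E (ContinuousLinearMap.adjoint γzbar x), h2⟩)) := by
  intro x
  set e := ContinuousLinearMap.adjoint γzbar x with he
  obtain ⟨h1, hBu⟩ := hE.1 e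
  have h2 : E e ∈ B'op.domain := hdomBB' ▸ h1
  refine ⟨h1, h2, ?_⟩
  have hBval : Bop ⟨E e, h1⟩ = e + Mz (E e) := eq_add_of_sub_eq hBu
  have hE'v : E' (B'op ⟨E e, h2⟩ - Mz (E e)) = E e := hE'.2 ⟨E e, h2⟩
  have hdiff : E' (Bop ⟨E e, h1⟩ - B'op ⟨E e, h2⟩) = E' e - E e := by
    rw [hBval]
    have hre : e + Mz (E e) - B'op ⟨E e, h2⟩
        = e - (B'op ⟨E e, h2⟩ - Mz (E e)) := by abel
    rw [hre, map_sub, hE'v]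
  rw [hdiff, map_sub,
    krein bt hAB' hA0 hR0 hRB' hγz hγzbar hMz hE' x,
    krein bt hAB hA0 hR0 hRB hγz hγzbar hMz hE x]
  abel

end PD
end
end

section
/- Let W(z) := I + i√V₊ (B − M(z))⁻¹ √V₊ where B is a bounded operator on a Hilbert space ℋ with Im B ≤ 0, M : ℂ₊ → B(ℋ) satisfies Im M(z) ≥ ε(z) I > 0 for z ∈ ℂ₊, and 0 ≤ V₊ ≤ 2|Im B|. Then I − W(z)*W(z) ≥ 0 for all z ∈ ℂ₊, i.e., W(z) is a contraction on ℂ₊. -/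
noncomputable section
open scoped InnerProductSpace ComplexConjugate
open MeasureTheory Filter

namespace PD

variable (H : Type*) [NormedAddCommGroup H] [InnerProductSpace ℂ H] [CompleteSpace H]

variable {H}

/-- With `Im B ≤ 0`, `Im M(z) ≥ ε(z) I > 0` on `ℂ₊` and
`0 ≤ V₊ ≤ 2|Im B|`, the operator `W(z) = I + i√V₊ (B - M(z))⁻¹ √V₊` satisfies
`I - W(z)*W(z) ≥ 0` on `ℂ₊`, i.e. `W(z)` is a contraction. -/
theorem statement_15 {𝓗 : Type*} [NormedAddCommGroup 𝓗] [InnerProductSpace ℂ 𝓗]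
    [CompleteSpace 𝓗]
    (B : 𝓗 →L[ℂ] 𝓗) (hB : (-(imP B)).IsPositive)
    (M : ℂ → 𝓗 →L[ℂ] 𝓗)
    (hM : ∀ z : ℂ, 0 < z.im →
      ∃ ε : ℝ, 0 < ε ∧ (imP (M z) - ε • (1 : 𝓗 →L[ℂ] 𝓗)).IsPositive)
    (Vp S : 𝓗 →L[ℂ] 𝓗) (hVp : Vp.IsPositive)
    (hVple : ((2 : ℝ) • (-(imP B)) - Vp).IsPositive)
    (hSpos : S.IsPositive) (hSsq : S.comp S = Vp)
    (hinv : ∀ z : ℂ, 0 < z.im → IsUnit (B - M z))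
    (W : ℂ → 𝓗 →L[ℂ] 𝓗)
    (hW : ∀ z, W z = 1 + Complex.I • (S.comp ((Ring.inverse (B - M z)).comp S))) :
    ∀ z : ℂ, 0 < z.im →
      (1 - (ContinuousLinearMap.adjoint (W z)).comp (W z)).IsPositive := by
  intro z hz
  obtain ⟨ε, hε, hMz⟩ := hM z hz
  have hu := hinv z hz
  set A : 𝓗 →L[ℂ] 𝓗 := B - M z with hA
  set R : 𝓗 →L[ℂ] 𝓗 := Ring.inverse A with hRdef
  have hAR : A * R = 1 := Ring.mul_inverse_cancel A hu
  have hSsa : ContinuousLinearMap.adjoint S = S := by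
    rw [← ContinuousLinearMap.star_eq_adjoint]; exact hSpos.isSelfAdjoint
  -- helper : re ⟪u, imP T u⟫ = im ⟪u, T u⟫
  have him : ∀ (T : 𝓗 →L[ℂ] 𝓗) (u : 𝓗), (⟪u, imP T u⟫_ℂ).re = (⟪u, T u⟫_ℂ).im := by
    intro T u
    have h1 : ⟪u, (ContinuousLinearMap.adjoint T) u⟫_ℂ = conj ⟪u, T u⟫_ℂ := by
      rw [ContinuousLinearMap.adjoint_inner_right, ← inner_conj_symm]
    have h2 : ⟪u, imP T u⟫_ℂ = ((⟪u, T u⟫_ℂ).im : ℂ) := by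
      simp only [imP, ContinuousLinearMap.smul_apply, ContinuousLinearMap.sub_apply,
        inner_smul_right, inner_sub_right, h1]
      rw [Complex.im_eq_sub_conj]
      ring
    rw [h2]; simp
  constructor
  · -- self-adjointness
    have h1 : (1 : 𝓗 →L[ℂ] 𝓗) - (ContinuousLinearMap.adjoint (W z)).comp (W z)
        = 1 - star (W z) * W z := by
      rw [ContinuousLinearMap.star_eq_adjoint, ContinuousLinearMap.mul_def]
    rw [h1]
    refine (IsSelfAdjoint.sub ?_ (IsSelfAdjoint.star_mul_self (W z))).isSymmetric
    exact IsSelfAdjoint.one _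
  · intro x
    set u : 𝓗 := R (S x) with hudef
    have hAu : A u = S x := by
      have h := congrArg (fun T : 𝓗 →L[ℂ] 𝓗 => T (S x)) hAR
      simpa [ContinuousLinearMap.mul_apply] using h
    have hWx : W z x = x + Complex.I • S u := by
      rw [hW]
      simp [ContinuousLinearMap.add_apply, ContinuousLinearMap.comp_apply, hudef]
      rfl
    -- main rewrite of the quadratic form
    have hre : (1 - (ContinuousLinearMap.adjoint (W z)).comp (W z)).reApplyInnerSelf x
        = ‖x‖ ^ 2 - ‖W z x‖ ^ 2 := by
      rw [ContinuousLinearMap.reApplyInnerSelf_apply]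
      simp only [ContinuousLinearMap.sub_apply, ContinuousLinearMap.one_apply,
        ContinuousLinearMap.comp_apply, inner_sub_left,
        ContinuousLinearMap.adjoint_inner_left]
      rw [map_sub, inner_self_eq_norm_sq, inner_self_eq_norm_sq]
    rw [hre]
    -- ⟪x, S u⟫ = ⟪A u, u⟫
    have hxSu : ⟪x, S u⟫_ℂ = ⟪A u, u⟫_ℂ := by
      rw [← ContinuousLinearMap.adjoint_inner_left S u x, hSsa, hAu]
    -- expand ‖W z x‖²
    have hnormW : ‖W z x‖ ^ 2 = ‖x‖ ^ 2 + 2 * (⟪u, A u⟫_ℂ).im + ‖S u‖ ^ 2 := by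
      rw [hWx, norm_add_sq (𝕜 := ℂ)]
      have h3 : RCLike.re ⟪x, Complex.I • S u⟫_ℂ = (⟪u, A u⟫_ℂ).im := by
        rw [inner_smul_right, hxSu]
        simp only [RCLike.re_to_complex, Complex.mul_re, Complex.I_re, Complex.I_im, zero_mul, one_mul, zero_sub]
        rw [← inner_conj_symm (A u) u, Complex.conj_im]
        ring
      rw [h3, norm_smul]
      simp
    -- ‖S u‖² = re ⟪u, Vp u⟫
    have hSu : ‖S u‖ ^ 2 = (⟪u, Vp u⟫_ℂ).re := by
      have hv : Vp u = S (S u) := by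
        have h := congrArg (fun T : 𝓗 →L[ℂ] 𝓗 => T u) hSsq
        simpa using h.symm
      have hinn : ⟪S u, S u⟫_ℂ = ⟪u, Vp u⟫_ℂ := by
        rw [hv, ← ContinuousLinearMap.adjoint_inner_left S (S u) u, hSsa]
      rw [← inner_self_eq_norm_sq (𝕜 := ℂ), hinn]
      rfl
    -- positivity facts
    have hb1 : 0 ≤ -(2 * (⟪u, imP B u⟫_ℂ).re) - (⟪u, Vp u⟫_ℂ).re := by
      have h := hVple.inner_nonneg_right u
      have he : ⟪u, ((2 : ℝ) • (-(imP B)) - Vp) u⟫_ℂ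
          = -((2 : ℂ) * ⟪u, imP B u⟫_ℂ) - ⟪u, Vp u⟫_ℂ := by
        simp only [ContinuousLinearMap.sub_apply, ContinuousLinearMap.smul_apply,
          ContinuousLinearMap.neg_apply, inner_sub_right]
        rw [← Complex.coe_smul, inner_smul_right, inner_neg_right]
        push_cast
        ring
      rw [he] at h
      replace h := (RCLike.nonneg_iff.mp h).1
      simp only [RCLike.re_to_complex, Complex.sub_re, Complex.neg_re, Complex.mul_re,
        Complex.re_ofNat, Complex.im_ofNat, zero_mul, sub_zero] at h
      linarith
    have hb2 : 0 ≤ (⟪u, imP (M z) u⟫_ℂ).re := by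
      have h := hMz.inner_nonneg_right u
      have he : ⟪u, (imP (M z) - ε • (1 : 𝓗 →L[ℂ] 𝓗)) u⟫_ℂ
          = ⟪u, imP (M z) u⟫_ℂ - (ε : ℂ) * ⟪u, u⟫_ℂ := by
        simp only [ContinuousLinearMap.sub_apply, ContinuousLinearMap.smul_apply,
          ContinuousLinearMap.one_apply, inner_sub_right]
        rw [← Complex.coe_smul, inner_smul_right]
      rw [he] at h
      have him0 : (⟪u, u⟫_ℂ).im = 0 := inner_self_im (𝕜 := ℂ) u
      have hre0 : (⟪u, u⟫_ℂ).re = ‖u‖ ^ 2 := inner_self_eq_norm_sq (𝕜 := ℂ) u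
      replace h := (RCLike.nonneg_iff.mp h).1
      simp only [RCLike.re_to_complex, Complex.sub_re, Complex.mul_re, Complex.ofReal_re,
        Complex.ofReal_im, zero_mul, sub_zero, him0, mul_zero, hre0] at h
      nlinarith [sq_nonneg ‖u‖]
    -- split Im ⟪u, A u⟫
    have hsplit : (⟪u, A u⟫_ℂ).im = (⟪u, B u⟫_ℂ).im - (⟪u, M z u⟫_ℂ).im := by
      rw [hA]
      simp [ContinuousLinearMap.sub_apply, inner_sub_right]
    have h1 := him B u
    have h2 := him (M z) u
    rw [hnormW, hSu, hsplit]
    rw [h1] at hb1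
    rw [h2] at hb2
    linarith

end PD
end
end
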